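/- arXiv:2602.14732 — 3 statements merged into one kernel-verified Lean document; each statement's English description precedes it below -/
import Mathlib

section
/- Let Λ be a quantum channel on matrices over a finite-dimensional complex Hilbert space ℋ with Kraus operators {K_a}_{a∈[n]}, let P be a positive definite matrix on ℋ such that Λ(P) is positive definite, and let C be a positive definite matrix on the output space. Define M := Λ(P)^{-1} # C and the Gamma map Γ_{Λ,C}[P] := Λ†(M) · P · Λ†(M). Then: (i) if K_a K_b† commutes with M for all a,b ∈ [n], then Λ(Γ_{Λ,C}[P]) = C; and (ii) Λ(Γ_{Λ,C}[P]) = C holds if and only if Γ_{Λ,C}[P] is the unique maximizer of Q ↦ F(P,Q) over the feasible set Λ^{-1}[C] := {Q PSD : Λ(Q) = C}. -/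
open Matrix Kronecker
open scoped ComplexOrder

noncomputable section

open Classical in
/-- The positive semidefinite square root of a PSD matrix (junk value `0` otherwise). -/
noncomputable def msqrt {n : Type*} [Fintype n] [DecidableEq n] (A : Matrix n n ℂ) :
    Matrix n n ℂ :=
  if h : A.PosSemidef then
    h.1.eigenvectorUnitary.1 * diagonal ((↑) ∘ (√·) ∘ h.1.eigenvalues) *
      (star h.1.eigenvectorUnitary : Matrix n n ℂ)
  else 0

/-- The (square-root) fidelity `F(P,Q) = Tr[√(√Q P √Q)]`. -/
noncomputable def fidelity {n : Type*} [Fintype n] [DecidableEq n]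
    (P Q : Matrix n n ℂ) : ℝ :=
  ((msqrt (msqrt Q * P * msqrt Q)).trace).re

/-- The matrix geometric mean `A # B = A^{1/2} √(A^{-1/2} B A^{-1/2}) A^{1/2}`. -/
noncomputable def geomMean {n : Type*} [Fintype n] [DecidableEq n]
    (A B : Matrix n n ℂ) : Matrix n n ℂ :=
  msqrt A * msqrt ((msqrt A)⁻¹ * B * (msqrt A)⁻¹) * msqrt A

set_option linter.unusedVariables false
set_option linter.unusedSectionVars false
set_option maxHeartbeats 1600000

namespace GammaAux
variable {n : Type*} [Fintype n] [DecidableEq n]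

open scoped MatrixOrder in
lemma msqrt_eq {A : Matrix n n ℂ} (h : A.PosSemidef) : msqrt A = CFC.sqrt A := by
  rw [CFC.sqrt_eq_real_sqrt A h.nonneg, cfcₙ_eq_cfc, h.1.cfc_eq, msqrt, dif_pos h,
    IsHermitian.cfc, Unitary.conjStarAlgAut_apply]
  rfl

open scoped MatrixOrder in
lemma msqrt_posSemidef {A : Matrix n n ℂ} (h : A.PosSemidef) : (msqrt A).PosSemidef := by
  rw [msqrt_eq h]; exact (CFC.sqrt_nonneg A).posSemidef

open scoped MatrixOrder in
lemma msqrt_mul_self {A : Matrix n n ℂ} (h : A.PosSemidef) : msqrt A * msqrt A = A := by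
  rw [msqrt_eq h]; exact CFC.sqrt_mul_sqrt_self A h.nonneg

lemma msqrt_herm {A : Matrix n n ℂ} (h : A.PosSemidef) : (msqrt A)ᴴ = msqrt A :=
  (msqrt_posSemidef h).isHermitian

open scoped MatrixOrder in
lemma msqrt_unique {A B : Matrix n n ℂ} (hB : B.PosSemidef) (hBA : B * B = A) :
    msqrt A = B := by
  have hA : A.PosSemidef := by
    rw [← hBA, ← pow_two]; exact hB.pow 2
  rw [msqrt_eq hA]
  exact (CFC.sqrt_eq_iff A B hA.nonneg hB.nonneg).mpr hBA

lemma posDef_of_sq {A B : Matrix n n ℂ} (hB : B.PosSemidef) (hBA : B * B = A)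
    (hA : A.PosDef) : B.PosDef := by
  refine Matrix.PosDef.of_dotProduct_mulVec_pos hB.isHermitian fun x hx => ?_
  have h0 : star x ⬝ᵥ B *ᵥ x ≠ 0 := by
    intro h
    have hBx : B *ᵥ x = 0 := (hB.dotProduct_mulVec_zero_iff x).mp h
    have : star x ⬝ᵥ A *ᵥ x = 0 := by
      rw [← hBA, ← Matrix.mulVec_mulVec, hBx, Matrix.mulVec_zero, dotProduct_zero]
    exact (hA.dotProduct_mulVec_pos hx).ne' this
  exact lt_of_le_of_ne (hB.dotProduct_mulVec_nonneg x) (Ne.symm h0)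

lemma msqrt_posDef {A : Matrix n n ℂ} (h : A.PosDef) : (msqrt A).PosDef :=
  posDef_of_sq (msqrt_posSemidef h.posSemidef) (msqrt_mul_self h.posSemidef) h


-- nonsingular inverse facts
lemma mul_inv_self {A : Matrix n n ℂ} (h : A.PosDef) : A * A⁻¹ = 1 :=
  Matrix.mul_nonsing_inv A h.det_pos.ne'.isUnit

lemma inv_mul_self {A : Matrix n n ℂ} (h : A.PosDef) : A⁻¹ * A = 1 :=
  Matrix.nonsing_inv_mul A h.det_pos.ne'.isUnit

-- conjugation by invertible preserves PosDef
lemma posDef_conj {A B : Matrix n n ℂ} (hA : A.PosDef) (hB : IsUnit B.det) :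
    (Bᴴ * A * B).PosDef := by
  refine Matrix.PosDef.of_dotProduct_mulVec_pos
    (Matrix.isHermitian_conjTranspose_mul_mul B hA.isHermitian) fun x hx => ?_
  have hBx : B *ᵥ x ≠ 0 := by
    intro h
    apply hx
    have := congrArg (B⁻¹ *ᵥ ·) h
    simpa [Matrix.mulVec_mulVec, Matrix.nonsing_inv_mul B hB] using this
  have := hA.dotProduct_mulVec_pos hBx
  calc (0:ℂ) < star (B *ᵥ x) ⬝ᵥ A *ᵥ (B *ᵥ x) := this
    _ = star x ⬝ᵥ (Bᴴ * A * B) *ᵥ x := by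
        rw [Matrix.star_mulVec, ← Matrix.dotProduct_mulVec, Matrix.mulVec_mulVec,
          Matrix.mulVec_mulVec, mul_assoc]

lemma diag_entry (M : Matrix n n ℂ) (i : n) :
    star (Pi.single i 1 : n → ℂ) ⬝ᵥ (M *ᵥ Pi.single i 1) = M i i := by
  simp [dotProduct, Matrix.mulVec, Pi.single_apply, apply_ite, Finset.sum_ite_eq,
    Finset.sum_ite_eq']

lemma herm_diag_real {W : Matrix n n ℂ} (hW : W.IsHermitian) (i : n) :
    W i i = ((W i i).re : ℂ) := by
  have := congrFun (congrFun hW.eq i) i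
  simp only [Matrix.conjTranspose_apply] at this
  exact ((Complex.conj_eq_iff_re).mp this).symm

lemma psd_diag_re_nonneg {G : Matrix n n ℂ} (hG : G.PosSemidef) (i : n) :
    0 ≤ (G i i).re := by
  have := hG.dotProduct_mulVec_nonneg (Pi.single i 1)
  rw [diag_entry] at this
  exact (Complex.le_def.mp this).1

lemma posdef_diag_re_pos {G : Matrix n n ℂ} (hG : G.PosDef) (i : n) :
    0 < (G i i).re := by
  have := hG.dotProduct_mulVec_pos (x := Pi.single i 1) (by simp [Function.ne_iff])
  rw [diag_entry] at this
  exact (Complex.lt_def.mp this).1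

/-- Key diagonal inequality `(W⁻¹)_{ii} ≥ 1/W_{ii}` for posdef `W`, with equality case. -/
lemma csw {W : Matrix n n ℂ} (hW : W.PosDef) (i : n) :
    (((W i i).re)⁻¹ : ℝ) ≤ ((W⁻¹) i i).re ∧
    (((W⁻¹) i i).re = ((W i i).re)⁻¹ →
      ∀ j, (W⁻¹) j i = if j = i then ((((W i i).re)⁻¹ : ℝ) : ℂ) else 0) := by
  set w : ℝ := (W i i).re with hw
  have hwpos : 0 < w := posdef_diag_re_pos hW i
  set c : ℂ := ((w⁻¹ : ℝ) : ℂ) with hc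
  set Z : Matrix n n ℂ := W⁻¹ - c • 1 with hZ
  have hZherm : Zᴴ = Z := by
    rw [hZ, Matrix.conjTranspose_sub, hW.inv.isHermitian.eq]
    congr 1
    rw [Matrix.conjTranspose_smul, Matrix.conjTranspose_one]
    congr 1
    simp [hc]
  have hG : (Zᴴ * W * Z).PosSemidef := hW.posSemidef.conjTranspose_mul_mul_same Z
  have hexp : Zᴴ * W * Z = W⁻¹ - (2 * c) • 1 + (c * c) • W := by
    rw [hZherm, hZ]
    simp only [sub_mul, mul_sub, smul_mul_assoc, mul_smul_comm, one_mul, mul_one,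
      inv_mul_self hW, mul_inv_self hW, smul_smul]
    module
  have hdiag : (Zᴴ * W * Z) i i = (W⁻¹) i i - 2 * c + c * c * W i i := by
    rw [hexp]
    simp [Matrix.add_apply, Matrix.sub_apply, Matrix.smul_apply, Matrix.one_apply, smul_eq_mul]
  have hWiire : W i i = (w : ℂ) := herm_diag_real hW.isHermitian i
  have hre : ((Zᴴ * W * Z) i i).re = ((W⁻¹) i i).re - w⁻¹ := by
    rw [hdiag, hWiire, hc]
    have : ((w⁻¹:ℝ):ℂ) * ((w⁻¹:ℝ):ℂ) * (w:ℂ) = ((w⁻¹ * w⁻¹ * w : ℝ) : ℂ) := by push_cast; ring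
    rw [this]
    have h2 : w⁻¹ * w⁻¹ * w = w⁻¹ := by field_simp
    rw [h2]
    simp [Complex.sub_re, Complex.add_re]
    ring
  have hge : 0 ≤ ((W⁻¹) i i).re - w⁻¹ := hre ▸ psd_diag_re_nonneg hG i
  refine ⟨by linarith, fun heq j => ?_⟩
  -- equality case: diagonal entry of PSD matrix vanishes, so its column vanishes
  have hG0 : ((Zᴴ * W * Z) i i) = 0 := by
    have him : ((Zᴴ * W * Z) i i).im = 0 := by
      have := herm_diag_real hG.isHermitian i
      rw [this]; simp
    have hre0 : ((Zᴴ * W * Z) i i).re = 0 := by rw [hre, heq]; ring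
    exact Complex.ext hre0 him
  -- G = Hᴴ H with H = √W * Z
  have hsq : msqrt W * msqrt W = W := msqrt_mul_self hW.posSemidef
  have hHG : (msqrt W * Z)ᴴ * (msqrt W * Z) = Zᴴ * W * Z := by
    rw [Matrix.conjTranspose_mul, (msqrt_posDef hW).isHermitian.eq]
    simp only [mul_assoc]
    rw [← mul_assoc (msqrt W), hsq]
  have hGii : ((msqrt W * Z)ᴴ * (msqrt W * Z)) i i = 0 := by rw [hHG]; exact hG0
  have hcol : ∀ j, (msqrt W * Z) j i = 0 := by
    intro j
    have h1 : ((msqrt W * Z)ᴴ * (msqrt W * Z)) i i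
        = ∑ k, (Complex.normSq ((msqrt W * Z) k i) : ℂ) := by
      rw [Matrix.mul_apply]
      refine Finset.sum_congr rfl fun k _ => ?_
      rw [Matrix.conjTranspose_apply, Complex.star_def, Complex.normSq_eq_conj_mul_self]
    have h2 : ∑ k, Complex.normSq ((msqrt W * Z) k i) = 0 := by
      have := h1 ▸ hGii
      exact_mod_cast this
    have hterm := (Finset.sum_eq_zero_iff_of_nonneg (fun k _ => Complex.normSq_nonneg _)).mp
      h2 j (Finset.mem_univ j)
    exact Complex.normSq_eq_zero.mp hterm
  have hZcol : ∀ j, Z j i = 0 := by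
    intro j
    have hinv : (msqrt W)⁻¹ * (msqrt W * Z) = Z := by
      rw [← mul_assoc, inv_mul_self (msqrt_posDef hW), one_mul]
    have : Z j i = ∑ k, ((msqrt W)⁻¹) j k * (msqrt W * Z) k i := by
      rw [← Matrix.mul_apply, hinv]
    rw [this]
    apply Finset.sum_eq_zero
    intro k _
    rw [hcol k, mul_zero]
  have hz := hZcol j
  rw [hZ, Matrix.sub_apply, Matrix.smul_apply, Matrix.one_apply, sub_eq_zero] at hz
  rw [hz]
  by_cases hji : j = i <;> simp [hji, hc]


lemma scalar_amgm {t a b : ℝ} (ht : 0 ≤ t) (ha : 0 < a) (hb : a⁻¹ ≤ b) :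
    t ≤ (t ^ 2 * a + b) / 2 := by
  have hba : 1 ≤ b * a := by
    have := mul_le_mul_of_nonneg_right hb ha.le
    rwa [inv_mul_cancel₀ ha.ne'] at this
  nlinarith [sq_nonneg (t * a - 1), ha, hba]

lemma scalar_amgm_eq {t a b : ℝ} (ht : 0 ≤ t) (ha : 0 < a) (hb : a⁻¹ ≤ b)
    (he : t = (t ^ 2 * a + b) / 2) : b = t ∧ b = a⁻¹ := by
  have hba : 1 ≤ b * a := by
    have := mul_le_mul_of_nonneg_right hb ha.le
    rwa [inv_mul_cancel₀ ha.ne'] at this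
  have he2 : 2 * t = t ^ 2 * a + b := by linarith
  have he3 : 2 * t * a = t ^ 2 * a * a + b * a := by linear_combination a * he2
  have hsq : 2 * t * a ≤ t ^ 2 * a * a + 1 := by nlinarith [sq_nonneg (t * a - 1)]
  have hba1 : b * a = 1 := le_antisymm (by linarith) hba
  have hb' : b = a⁻¹ := eq_inv_of_mul_eq_one_left hba1
  have htasq : (t * a - 1) ^ 2 = 0 := by linear_combination (-1 : ℝ) * he3 - hba1
  have hta : t * a = 1 := by
    have h0 := pow_eq_zero_iff (n := 2) (by norm_num) |>.mp htasq
    linarith [sub_eq_zero.mp h0]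
  have ht' : t = a⁻¹ := eq_inv_of_mul_eq_one_left hta
  exact ⟨hb'.trans ht'.symm, hb'⟩


end GammaAux
namespace GammaAux
variable {n : Type*} [Fintype n] [DecidableEq n]

lemma trace_msqrt_sym (X : Matrix n n ℂ) :
    (msqrt (Xᴴ * X)).trace = (msqrt (X * Xᴴ)).trace := by
  have hA : (Xᴴ * X).PosSemidef := Matrix.posSemidef_conjTranspose_mul_self X
  have hH : (Xᴴ * X).IsHermitian := hA.isHermitian
  set U : Matrix n n ℂ := (Matrix.IsHermitian.eigenvectorUnitary hH : Matrix n n ℂ) with hU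
  set d : n → ℝ := hH.eigenvalues with hdd
  have hd : ∀ i, 0 ≤ d i := hA.eigenvalues_nonneg
  have hUU : Uᴴ * U = 1 := by
    rw [← Matrix.star_eq_conjTranspose]
    exact Matrix.mem_unitaryGroup_iff'.mp (Matrix.IsHermitian.eigenvectorUnitary hH).2
  have hUU' : U * Uᴴ = 1 := by
    rw [← Matrix.star_eq_conjTranspose]
    exact Matrix.mem_unitaryGroup_iff.mp (Matrix.IsHermitian.eigenvectorUnitary hH).2
  have hspec : Xᴴ * X = U * Matrix.diagonal (fun i => (d i : ℂ)) * Uᴴ := by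
    have := hH.spectral_theorem
    rw [← Matrix.star_eq_conjTranspose]
    exact this
  have hdiagPSD : (Matrix.diagonal (fun i => ((Real.sqrt (d i) : ℝ) : ℂ))).PosSemidef := by
    rw [Matrix.posSemidef_diagonal_iff]
    intro i
    rw [Complex.zero_le_real]
    exact Real.sqrt_nonneg _
  have hsqA : msqrt (Xᴴ * X) = U * Matrix.diagonal (fun i => ((Real.sqrt (d i) : ℝ) : ℂ)) * Uᴴ := by
    apply msqrt_unique (hdiagPSD.mul_mul_conjTranspose_same U)
    have hfun : (fun i => ((Real.sqrt (d i) : ℝ) : ℂ) * ((Real.sqrt (d i) : ℝ) : ℂ))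
        = fun i => ((d i : ℝ) : ℂ) := by
      funext i
      rw [← Complex.ofReal_mul, Real.mul_self_sqrt (hd i)]
    calc U * Matrix.diagonal (fun i => ((Real.sqrt (d i) : ℝ) : ℂ)) * Uᴴ *
          (U * Matrix.diagonal (fun i => ((Real.sqrt (d i) : ℝ) : ℂ)) * Uᴴ)
        = U * (Matrix.diagonal (fun i => ((Real.sqrt (d i) : ℝ) : ℂ)) * (Uᴴ * U) *
            Matrix.diagonal (fun i => ((Real.sqrt (d i) : ℝ) : ℂ))) * Uᴴ := by
          simp only [mul_assoc]
      _ = U * Matrix.diagonal (fun i => (d i : ℂ)) * Uᴴ := by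
          rw [hUU, mul_one, Matrix.diagonal_mul_diagonal, hfun]
      _ = Xᴴ * X := hspec.symm
  have htr0 : (msqrt (Xᴴ * X)).trace = ∑ i, ((Real.sqrt (d i) : ℝ) : ℂ) := by
    rw [hsqA, Matrix.trace_mul_cycle, hUU, one_mul, Matrix.trace_diagonal]
  -- now the other side
  set Y : Matrix n n ℂ := X * U with hY
  have hYY : Yᴴ * Y = Matrix.diagonal (fun i => (d i : ℂ)) := by
    rw [hY, Matrix.conjTranspose_mul]
    calc Uᴴ * Xᴴ * (X * U) = Uᴴ * (Xᴴ * X) * U := by simp only [mul_assoc]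
      _ = Uᴴ * (U * Matrix.diagonal (fun i => (d i : ℂ)) * Uᴴ) * U := by rw [← hspec]
      _ = (Uᴴ * U) * Matrix.diagonal (fun i => (d i : ℂ)) * (Uᴴ * U) := by
          simp only [mul_assoc]
      _ = Matrix.diagonal (fun i => (d i : ℂ)) := by rw [hUU, one_mul, mul_one]
  set J : Matrix n n ℂ := Matrix.diagonal (fun i => if d i = 0 then (0 : ℂ) else 1) with hJ
  set E : Matrix n n ℂ :=
    Matrix.diagonal (fun i => if d i = 0 then (0 : ℂ) else (((Real.sqrt (d i))⁻¹ : ℝ) : ℂ))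
    with hE
  have h1J : (1 : Matrix n n ℂ) - J
      = Matrix.diagonal (fun i => 1 - (if d i = 0 then (0:ℂ) else 1)) := by
    rw [hJ, ← Matrix.diagonal_one, Matrix.diagonal_sub]
  have h1Jh : ((1 : Matrix n n ℂ) - J)ᴴ = 1 - J := by
    rw [h1J, Matrix.diagonal_conjTranspose]
    have hstar : star (fun i => 1 - (if d i = 0 then (0:ℂ) else 1))
        = fun i => 1 - (if d i = 0 then (0:ℂ) else 1) := by
      funext i
      by_cases hdi : d i = 0 <;> simp [hdi]
    rw [hstar]
  have hYJ : Y * J = Y := by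
    have hz : (Y * (1 - J))ᴴ * (Y * (1 - J)) = 0 := by
      rw [Matrix.conjTranspose_mul]
      calc (1 - J)ᴴ * Yᴴ * (Y * (1 - J)) = (1 - J)ᴴ * (Yᴴ * Y) * (1 - J) := by
            simp only [mul_assoc]
        _ = 0 := by
            rw [h1Jh, h1J, hYY, Matrix.diagonal_mul_diagonal, Matrix.diagonal_mul_diagonal]
            have hfz : (fun i => (1 - (if d i = 0 then (0:ℂ) else 1)) * (d i : ℂ)
                * (1 - (if d i = 0 then (0:ℂ) else 1))) = fun _ => (0:ℂ) := by
              funext i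
              by_cases hdi : d i = 0 <;> simp [hdi]
            rw [hfz, Matrix.diagonal_zero]
    have h0 : Y * (1 - J) = 0 := Matrix.conjTranspose_mul_self_eq_zero.mp hz
    rw [Matrix.mul_sub, mul_one, sub_eq_zero] at h0
    exact h0.symm
  have hEpsd : E.PosSemidef := by
    rw [hE, Matrix.posSemidef_diagonal_iff]
    intro i
    by_cases hdi : d i = 0
    · rw [if_pos hdi]
    · rw [if_neg hdi, Complex.zero_le_real]
      positivity
  have hEDE : E * Matrix.diagonal (fun i => (d i : ℂ)) * E = J := by
    have hfun : (fun i => (if d i = 0 then (0:ℂ) else (((Real.sqrt (d i))⁻¹ : ℝ) : ℂ)) * (d i : ℂ)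
        * (if d i = 0 then (0:ℂ) else (((Real.sqrt (d i))⁻¹ : ℝ) : ℂ)))
        = (fun i => if d i = 0 then (0:ℂ) else 1) := by
      funext i
      by_cases hdi : d i = 0
      · simp [hdi]
      · simp only [hdi, if_false]
        rw [← Complex.ofReal_mul, ← Complex.ofReal_mul]
        norm_cast
        rw [show (Real.sqrt (d i))⁻¹ * d i * (Real.sqrt (d i))⁻¹
            = d i / (Real.sqrt (d i) * Real.sqrt (d i)) by ring, Real.mul_self_sqrt (hd i),
          div_self hdi]
    rw [hE, hJ, Matrix.diagonal_mul_diagonal, Matrix.diagonal_mul_diagonal, hfun]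
  set G : Matrix n n ℂ := Y * E * Yᴴ with hG
  have hGpsd : G.PosSemidef := hEpsd.mul_mul_conjTranspose_same Y
  have hGsq : G * G = X * Xᴴ := by
    calc G * G = Y * E * (Yᴴ * Y) * (E * Yᴴ) := by rw [hG]; simp only [mul_assoc]
      _ = Y * E * Matrix.diagonal (fun i => (d i : ℂ)) * (E * Yᴴ) := by rw [hYY]
      _ = Y * (E * Matrix.diagonal (fun i => (d i : ℂ)) * E) * Yᴴ := by simp only [mul_assoc]
      _ = Y * J * Yᴴ := by rw [hEDE]
      _ = Y * Yᴴ := by rw [hYJ]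
      _ = X * Xᴴ := by
          rw [hY, Matrix.conjTranspose_mul]
          calc X * U * (Uᴴ * Xᴴ) = X * (U * Uᴴ) * Xᴴ := by simp only [mul_assoc]
            _ = X * Xᴴ := by rw [hUU', mul_one]
  have hmsq : msqrt (X * Xᴴ) = G := msqrt_unique hGpsd hGsq
  have htr1 : (msqrt (X * Xᴴ)).trace = ∑ i, ((Real.sqrt (d i) : ℝ) : ℂ) := by
    rw [hmsq, hG, Matrix.trace_mul_cycle, hYY, Matrix.diagonal_mul_diagonal,
      Matrix.trace_diagonal]
    apply Finset.sum_congr rfl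
    intro i _
    by_cases hdi : d i = 0
    · simp [hdi]
    · simp only [hdi, if_false]
      rw [← Complex.ofReal_mul]
      norm_cast
      rw [show d i * (Real.sqrt (d i))⁻¹ = d i / Real.sqrt (d i) by ring]
      rw [Real.div_sqrt]
  rw [htr0, htr1]

end GammaAux
namespace GammaAux
variable {n : Type*} [Fintype n] [DecidableEq n]

lemma lemA {A W' : Matrix n n ℂ} (hA : A.PosSemidef) (hW' : W'.PosDef) :
    (msqrt A).trace.re ≤ ((A * W').trace.re + (W'⁻¹).trace.re) / 2 ∧
    ((msqrt A).trace.re = ((A * W').trace.re + (W'⁻¹).trace.re) / 2 → W'⁻¹ = msqrt A) := by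
  have hH : A.IsHermitian := hA.isHermitian
  set U : Matrix n n ℂ := (Matrix.IsHermitian.eigenvectorUnitary hH : Matrix n n ℂ) with hU
  set d : n → ℝ := hH.eigenvalues with hdd
  have hd : ∀ i, 0 ≤ d i := hA.eigenvalues_nonneg
  have hUU : Uᴴ * U = 1 := by
    rw [← Matrix.star_eq_conjTranspose]
    exact Matrix.mem_unitaryGroup_iff'.mp (Matrix.IsHermitian.eigenvectorUnitary hH).2
  have hUU' : U * Uᴴ = 1 := by
    rw [← Matrix.star_eq_conjTranspose]
    exact Matrix.mem_unitaryGroup_iff.mp (Matrix.IsHermitian.eigenvectorUnitary hH).2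
  have hUdet : IsUnit U.det := by
    apply IsUnit.of_mul_eq_one Uᴴ.det
    rw [← Matrix.det_mul, hUU', Matrix.det_one]
  have hspec : A = U * Matrix.diagonal (fun i => (d i : ℂ)) * Uᴴ := by
    have := hH.spectral_theorem
    rw [← Matrix.star_eq_conjTranspose]
    exact this
  have hdiagPSD : (Matrix.diagonal (fun i => ((Real.sqrt (d i) : ℝ) : ℂ))).PosSemidef := by
    rw [Matrix.posSemidef_diagonal_iff]
    intro i
    rw [Complex.zero_le_real]
    exact Real.sqrt_nonneg _
  have hsqA : msqrt A = U * Matrix.diagonal (fun i => ((Real.sqrt (d i) : ℝ) : ℂ)) * Uᴴ := by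
    apply msqrt_unique (hdiagPSD.mul_mul_conjTranspose_same U)
    have hfun : (fun i => ((Real.sqrt (d i) : ℝ) : ℂ) * ((Real.sqrt (d i) : ℝ) : ℂ))
        = fun i => ((d i : ℝ) : ℂ) := by
      funext i
      rw [← Complex.ofReal_mul, Real.mul_self_sqrt (hd i)]
    calc U * Matrix.diagonal (fun i => ((Real.sqrt (d i) : ℝ) : ℂ)) * Uᴴ *
          (U * Matrix.diagonal (fun i => ((Real.sqrt (d i) : ℝ) : ℂ)) * Uᴴ)
        = U * (Matrix.diagonal (fun i => ((Real.sqrt (d i) : ℝ) : ℂ)) * (Uᴴ * U) *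
            Matrix.diagonal (fun i => ((Real.sqrt (d i) : ℝ) : ℂ))) * Uᴴ := by
          simp only [mul_assoc]
      _ = U * Matrix.diagonal (fun i => (d i : ℂ)) * Uᴴ := by
          rw [hUU, mul_one, Matrix.diagonal_mul_diagonal, hfun]
      _ = A := hspec.symm
  have htr0 : (msqrt A).trace.re = ∑ i, Real.sqrt (d i) := by
    rw [hsqA, Matrix.trace_mul_cycle, hUU, one_mul, Matrix.trace_diagonal, Complex.re_sum]
    exact Finset.sum_congr rfl fun i _ => Complex.ofReal_re _
  set Wt : Matrix n n ℂ := Uᴴ * W' * U with hWtdef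
  have hWt : Wt.PosDef := posDef_conj (B := U) hW' hUdet
  have hWtinv : Wt⁻¹ = Uᴴ * W'⁻¹ * U := by
    apply Matrix.inv_eq_right_inv
    calc Uᴴ * W' * U * (Uᴴ * W'⁻¹ * U)
        = Uᴴ * (W' * (U * Uᴴ) * W'⁻¹) * U := by simp only [mul_assoc]
      _ = 1 := by rw [hUU', mul_one, mul_inv_self hW', mul_one, hUU]
  have htrAW : (A * W').trace = ∑ i, (d i : ℂ) * Wt i i := by
    rw [hspec, Matrix.trace_mul_cycle, Matrix.trace_mul_cycle]
    rw [show Uᴴ * W' * (U * Matrix.diagonal (fun i => (d i : ℂ)))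
        = Wt * Matrix.diagonal (fun i => (d i : ℂ)) by simp only [hWtdef, mul_assoc]]
    rw [Matrix.trace]
    refine Finset.sum_congr rfl fun i _ => ?_
    rw [Matrix.diag_apply, Matrix.mul_diagonal, mul_comm]
  have htrAWre : (A * W').trace.re = ∑ i, d i * (Wt i i).re := by
    rw [htrAW, Complex.re_sum]
    exact Finset.sum_congr rfl fun i _ => by simp [Complex.mul_re]
  have htrWinv : (W'⁻¹).trace = ∑ i, (Wt⁻¹) i i := by
    have h1 : Wt⁻¹.trace = (W'⁻¹).trace := by
      rw [hWtinv, Matrix.trace_mul_cycle, hUU', one_mul]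
    rw [← h1, Matrix.trace]
    rfl
  have htrWinvre : (W'⁻¹).trace.re = ∑ i, ((Wt⁻¹) i i).re := by
    rw [htrWinv, Complex.re_sum]
  have ha : ∀ i, 0 < (Wt i i).re := posdef_diag_re_pos hWt
  have hab : ∀ i, ((Wt i i).re)⁻¹ ≤ ((Wt⁻¹) i i).re := fun i => (csw hWt i).1
  have hterm : ∀ i, Real.sqrt (d i) ≤ (d i * (Wt i i).re + ((Wt⁻¹) i i).re) / 2 := by
    intro i
    have := scalar_amgm (Real.sqrt_nonneg (d i)) (ha i) (hab i)
    rwa [Real.sq_sqrt (hd i)] at this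
  have hsum2 : ∑ i, (d i * (Wt i i).re + ((Wt⁻¹) i i).re) / 2
      = (∑ i, d i * (Wt i i).re + ∑ i, ((Wt⁻¹) i i).re) / 2 := by
    rw [← Finset.sum_add_distrib, Finset.sum_div]
  have hineq : (msqrt A).trace.re ≤ ((A * W').trace.re + (W'⁻¹).trace.re) / 2 := by
    rw [htr0, htrAWre, htrWinvre, ← hsum2]
    exact Finset.sum_le_sum fun i _ => hterm i
  refine ⟨hineq, fun heq => ?_⟩
  have heq2 : ∑ i, Real.sqrt (d i) = ∑ i, (d i * (Wt i i).re + ((Wt⁻¹) i i).re) / 2 := by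
    rw [hsum2, ← htrAWre, ← htrWinvre, ← htr0]
    exact heq
  have hper := (Finset.sum_eq_sum_iff_of_le fun i _ => hterm i).mp heq2
  have hWtinvdiag : Wt⁻¹ = Matrix.diagonal (fun i => ((Real.sqrt (d i) : ℝ) : ℂ)) := by
    ext j i
    have hpi : Real.sqrt (d i) = (Real.sqrt (d i) ^ 2 * (Wt i i).re + ((Wt⁻¹) i i).re) / 2 := by
      rw [Real.sq_sqrt (hd i)]
      exact hper i (Finset.mem_univ i)
    obtain ⟨hbt, hbinv⟩ := scalar_amgm_eq (Real.sqrt_nonneg (d i)) (ha i) (hab i) hpi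
    have hcol := (csw hWt i).2 hbinv j
    rw [hcol, Matrix.diagonal_apply]
    by_cases hji : j = i
    · subst hji
      rw [if_pos rfl, if_pos rfl]
      exact_mod_cast congrArg (fun r : ℝ => (r : ℂ)) (hbinv.symm.trans hbt)
    · rw [if_neg hji, if_neg hji]
  have hconj : U * (Uᴴ * W'⁻¹ * U) * Uᴴ = W'⁻¹ := by
    calc U * (Uᴴ * W'⁻¹ * U) * Uᴴ = (U * Uᴴ) * (W'⁻¹ * (U * Uᴴ)) := by simp only [mul_assoc]
      _ = W'⁻¹ := by rw [hUU', one_mul, mul_one]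
  rw [hsqA, ← hWtinvdiag, hWtinv]
  exact hconj.symm

end GammaAux
namespace GammaAux

lemma cs_dot {ι : Type*} [Fintype ι] (u v : ι → ℂ) :
    Complex.normSq (dotProduct (star u) v)
      ≤ (dotProduct (star u) u).re * (dotProduct (star v) v).re := by
  have h := norm_inner_le_norm (𝕜 := ℂ) (E := EuclideanSpace ℂ ι)
    ((WithLp.equiv 2 _).symm u) ((WithLp.equiv 2 _).symm v)
  have key : ∀ x y : ι → ℂ, inner ℂ (E := EuclideanSpace ℂ ι) ((WithLp.equiv 2 _).symm x)
      ((WithLp.equiv 2 _).symm y) = dotProduct (star x) y := fun x y => by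
    rw [dotProduct_comm]; rfl
  rw [key] at h
  have hu : ‖(WithLp.equiv 2 (ι → ℂ)).symm u‖ ^ 2 = (dotProduct (star u) u).re := by
    rw [← key, ← inner_self_eq_norm_sq (𝕜 := ℂ)]
    rfl
  have hv : ‖(WithLp.equiv 2 (ι → ℂ)).symm v‖ ^ 2 = (dotProduct (star v) v).re := by
    rw [← key, ← inner_self_eq_norm_sq (𝕜 := ℂ)]
    rfl
  have h2 : ‖dotProduct (star u) v‖ ^ 2
      ≤ (‖(WithLp.equiv 2 (ι → ℂ)).symm u‖ * ‖(WithLp.equiv 2 (ι → ℂ)).symm v‖) ^ 2 := by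
    apply pow_le_pow_left₀ (norm_nonneg _) h
  rw [mul_pow, hu, hv] at h2
  rw [Complex.normSq_eq_norm_sq]; exact h2


end GammaAux
namespace GammaAux
variable {n : Type*} [Fintype n] [DecidableEq n]

lemma psd_sum {ι : Type*} (s : Finset ι) (f : ι → Matrix n n ℂ)
    (h : ∀ i ∈ s, (f i).PosSemidef) : (∑ i ∈ s, f i).PosSemidef :=
  Finset.sum_induction f _ (fun _ _ ha hb => ha.add hb) Matrix.PosSemidef.zero h

lemma herm_sum {ι : Type*} (s : Finset ι) (f : ι → Matrix n n ℂ)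
    (h : ∀ i ∈ s, (f i).IsHermitian) : (∑ i ∈ s, f i).IsHermitian := by
  unfold Matrix.IsHermitian at *
  rw [Matrix.conjTranspose_sum]
  exact Finset.sum_congr rfl h

lemma sum_mulVec {ι H K : Type*} [Fintype H] [Fintype K] (s : Finset ι)
    (f : ι → Matrix K H ℂ) (y : H → ℂ) :
    (∑ a ∈ s, f a) *ᵥ y = ∑ a ∈ s, f a *ᵥ y := by
  funext k
  rw [Finset.sum_apply]
  simp only [Matrix.mulVec, dotProduct, Matrix.sum_apply, Finset.sum_mul]
  rw [Finset.sum_comm]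

lemma dotProduct_sum' {ι H : Type*} [Fintype H] (s : Finset ι) (v : H → ℂ) (w : ι → H → ℂ) :
    v ⬝ᵥ (∑ a ∈ s, w a) = ∑ a ∈ s, v ⬝ᵥ w a := by
  simp only [dotProduct, Finset.sum_apply, Finset.mul_sum]
  rw [Finset.sum_comm]

lemma dot2 {H K : Type*} [Fintype H] [Fintype K] (C D : Matrix K H ℂ) (x y : H → ℂ) :
    star (C *ᵥ x) ⬝ᵥ (D *ᵥ y) = star x ⬝ᵥ ((Cᴴ * D) *ᵥ y) := by
  rw [Matrix.star_mulVec, ← Matrix.dotProduct_mulVec, Matrix.mulVec_mulVec]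

section Channel
variable {H K : Type*} [Fintype H] [DecidableEq H] [Fintype K] [DecidableEq K]
  {m : ℕ} (Kr : Fin m → Matrix K H ℂ)

lemma kraus_herm {M : Matrix K K ℂ} (hM : M.IsHermitian) :
    (∑ a, (Kr a)ᴴ * M * Kr a).IsHermitian :=
  herm_sum _ _ fun a _ => Matrix.isHermitian_conjTranspose_mul_mul (Kr a) hM

lemma kraus_psd {M : Matrix K K ℂ} (hM : M.PosSemidef) :
    (∑ a, (Kr a)ᴴ * M * Kr a).PosSemidef :=
  psd_sum _ _ fun a _ => hM.conjTranspose_mul_mul_same (Kr a)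

lemma kraus_quad (M : Matrix K K ℂ) (x y : H → ℂ) :
    star x ⬝ᵥ ((∑ a, (Kr a)ᴴ * M * Kr a) *ᵥ y)
      = ∑ a, star (Kr a *ᵥ x) ⬝ᵥ (M *ᵥ (Kr a *ᵥ y)) := by
  rw [sum_mulVec, dotProduct_sum']
  refine Finset.sum_congr rfl fun a _ => ?_
  rw [Matrix.mulVec_mulVec, dot2, Matrix.mul_assoc]

lemma kraus_posDef (hTP : ∑ a, (Kr a)ᴴ * Kr a = (1 : Matrix H H ℂ))
    {M : Matrix K K ℂ} (hM : M.PosDef) :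
    (∑ a, (Kr a)ᴴ * M * Kr a).PosDef := by
  refine Matrix.PosDef.of_dotProduct_mulVec_pos (kraus_herm Kr hM.isHermitian) fun x hx => ?_
  have hKx : ∃ a, Kr a *ᵥ x ≠ 0 := by
    by_contra hall
    push_neg at hall
    have h1 : star x ⬝ᵥ ((∑ a, (Kr a)ᴴ * (1 : Matrix K K ℂ) * Kr a) *ᵥ x) = 0 := by
      rw [kraus_quad]
      apply Finset.sum_eq_zero
      intro a _
      rw [hall a, Matrix.mulVec_zero, dotProduct_zero]
    have h2 : (∑ a, (Kr a)ᴴ * (1 : Matrix K K ℂ) * Kr a) = 1 := by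
      rw [← hTP]
      exact Finset.sum_congr rfl fun a _ => by rw [Matrix.mul_one]
    rw [h2, Matrix.one_mulVec] at h1
    exact hx (dotProduct_star_self_eq_zero.mp h1)
  obtain ⟨a0, ha0⟩ := hKx
  rw [kraus_quad Kr M x x]
  apply Finset.sum_pos' (fun a _ => (hM.posSemidef).dotProduct_mulVec_nonneg (Kr a *ᵥ x))
  exact ⟨a0, Finset.mem_univ a0, hM.dotProduct_mulVec_pos ha0⟩

/-- Choi / Kadison-type inequality `Λ†(M⁻¹) ≥ (Λ†(M))⁻¹`. -/
lemma choi (hTP : ∑ a, (Kr a)ᴴ * Kr a = (1 : Matrix H H ℂ))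
    {M : Matrix K K ℂ} (hM : M.PosDef) :
    ((∑ a, (Kr a)ᴴ * M⁻¹ * Kr a) - (∑ a, (Kr a)ᴴ * M * Kr a)⁻¹).PosSemidef := by
  set N : Matrix H H ℂ := ∑ a, (Kr a)ᴴ * M * Kr a with hN
  have hNpd : N.PosDef := kraus_posDef Kr hTP hM
  have hS : (∑ a, (Kr a)ᴴ * M⁻¹ * Kr a).PosSemidef := kraus_psd Kr hM.inv.posSemidef
  refine Matrix.PosSemidef.of_dotProduct_mulVec_nonneg
    ((hS.isHermitian).sub (hNpd.inv.isHermitian)) fun x => ?_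
  rw [Matrix.sub_mulVec, dotProduct_sub]
  set y : H → ℂ := N⁻¹ *ᵥ x with hy
  set t : ℂ := star x ⬝ᵥ (N⁻¹ *ᵥ x) with ht
  set s : ℂ := star x ⬝ᵥ ((∑ a, (Kr a)ᴴ * M⁻¹ * Kr a) *ᵥ x) with hs
  have hts : 0 ≤ t := hNpd.inv.posSemidef.dotProduct_mulVec_nonneg x
  have hss : 0 ≤ s := hS.dotProduct_mulVec_nonneg x
  have hyNy : star y ⬝ᵥ (N *ᵥ y) = t := by
    have hNy : N *ᵥ y = x := by
      rw [hy, Matrix.mulVec_mulVec, mul_inv_self hNpd, Matrix.one_mulVec]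
    rw [hNy, ht, hy, Matrix.star_mulVec, ← Matrix.dotProduct_mulVec, hNpd.inv.isHermitian.eq]
  set R : Matrix K K ℂ := msqrt M with hR
  have hRpd : R.PosDef := msqrt_posDef hM
  have hRR : R * R = M := msqrt_mul_self hM.posSemidef
  have hRinv : (R⁻¹)ᴴ = R⁻¹ := hRpd.inv.isHermitian
  have hMinv : R⁻¹ * R⁻¹ = M⁻¹ := by rw [← Matrix.mul_inv_rev, hRR]
  set u : Fin m × K → ℂ := fun p => (R⁻¹ *ᵥ (Kr p.1 *ᵥ x)) p.2 with hu
  set v : Fin m × K → ℂ := fun p => (R *ᵥ (Kr p.1 *ᵥ y)) p.2 with hv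
  have hsplit : ∀ (w z : Fin m × K → ℂ), star w ⬝ᵥ z
      = ∑ a : Fin m, ∑ k : K, star (w (a, k)) * z (a, k) := by
    intro w z
    rw [dotProduct, Fintype.sum_prod_type]
    rfl
  have huu : star u ⬝ᵥ u = s := by
    rw [hsplit, hs, kraus_quad]
    refine Finset.sum_congr rfl fun a _ => ?_
    have h0 : ∑ k, star (u (a, k)) * u (a, k)
        = star (R⁻¹ *ᵥ (Kr a *ᵥ x)) ⬝ᵥ (R⁻¹ *ᵥ (Kr a *ᵥ x)) := rfl
    rw [h0, dot2, hRinv, hMinv]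
  have hvv : star v ⬝ᵥ v = t := by
    rw [hsplit, ← hyNy, kraus_quad]
    refine Finset.sum_congr rfl fun a _ => ?_
    have h0 : ∑ k, star (v (a, k)) * v (a, k)
        = star (R *ᵥ (Kr a *ᵥ y)) ⬝ᵥ (R *ᵥ (Kr a *ᵥ y)) := rfl
    rw [h0, dot2, hRpd.isHermitian.eq, hRR]
  have huv : star u ⬝ᵥ v = t := by
    have hone : star x ⬝ᵥ ((∑ a, (Kr a)ᴴ * (1 : Matrix K K ℂ) * Kr a) *ᵥ y)
        = ∑ a, star (Kr a *ᵥ x) ⬝ᵥ ((1 : Matrix K K ℂ) *ᵥ (Kr a *ᵥ y)) := kraus_quad Kr 1 x y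
    have h2 : (∑ a, (Kr a)ᴴ * (1 : Matrix K K ℂ) * Kr a) = 1 := by
      rw [← hTP]
      exact Finset.sum_congr rfl fun a _ => by rw [Matrix.mul_one]
    rw [h2, Matrix.one_mulVec] at hone
    rw [hsplit]
    rw [show ∑ a : Fin m, ∑ k : K, star (u (a, k)) * v (a, k)
        = ∑ a : Fin m, star (R⁻¹ *ᵥ (Kr a *ᵥ x)) ⬝ᵥ (R *ᵥ (Kr a *ᵥ y)) from rfl]
    have h3 : ∀ a : Fin m, star (R⁻¹ *ᵥ (Kr a *ᵥ x)) ⬝ᵥ (R *ᵥ (Kr a *ᵥ y))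
        = star (Kr a *ᵥ x) ⬝ᵥ ((1 : Matrix K K ℂ) *ᵥ (Kr a *ᵥ y)) := by
      intro a
      rw [dot2, hRinv, inv_mul_self hRpd]
    rw [Finset.sum_congr rfl fun a _ => h3 a, ← hone, ht, hy]
  -- Cauchy-Schwarz
  have hcs := cs_dot u v
  rw [huu, hvv, huv] at hcs
  have htim : t.im = 0 := ((Complex.le_def.mp hts).2).symm
  have hsim : s.im = 0 := ((Complex.le_def.mp hss).2).symm
  have htre : 0 ≤ t.re := (Complex.le_def.mp hts).1
  have hnormSq : Complex.normSq t = t.re * t.re := by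
    rw [Complex.normSq_apply, htim]; ring
  rw [hnormSq] at hcs
  have hfin : t.re ≤ s.re := by
    rcases eq_or_lt_of_le htre with h0 | h0
    · rw [← h0]
      exact (Complex.le_def.mp hss).1
    · nlinarith [hcs]
  rw [Complex.le_def]
  constructor
  · simp [Complex.sub_re]
    linarith
  · simp [Complex.sub_im, htim, hsim]

end Channel
end GammaAux
namespace GammaAux
variable {n : Type*} [Fintype n] [DecidableEq n]

lemma psd_trace_re_nonneg {G : Matrix n n ℂ} (h : G.PosSemidef) : 0 ≤ G.trace.re := by
  rw [Matrix.trace, Complex.re_sum]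
  apply Finset.sum_nonneg
  intro i _
  exact psd_diag_re_nonneg h i

lemma trace_mul_psd_nonneg {Q D : Matrix n n ℂ} (hQ : Q.PosSemidef) (hD : D.PosSemidef) :
    0 ≤ (Q * D).trace.re := by
  have h1 : (Q * D).trace = (msqrt Q * D * msqrt Q).trace := by
    conv_lhs => rw [← msqrt_mul_self hQ]
    rw [Matrix.trace_mul_cycle, Matrix.trace_mul_cycle]
  rw [h1]
  apply psd_trace_re_nonneg
  have := hD.conjTranspose_mul_mul_same (msqrt Q)
  rwa [msqrt_herm hQ] at this

lemma msqrt_inv {S : Matrix n n ℂ} (hS : S.PosDef) : msqrt (S⁻¹) = (msqrt S)⁻¹ :=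
  msqrt_unique ((msqrt_posDef hS).inv.posSemidef)
    (by rw [← Matrix.mul_inv_rev, msqrt_mul_self hS.posSemidef])

lemma geom_riccati {S C : Matrix n n ℂ} (hS : S.PosDef) (hC : C.PosDef) :
    (geomMean S⁻¹ C).PosDef ∧ geomMean S⁻¹ C * S * geomMean S⁻¹ C = C := by
  set T : Matrix n n ℂ := msqrt S with hT
  have hTpd : T.PosDef := msqrt_posDef hS
  have hTT : T * T = S := msqrt_mul_self hS.posSemidef
  have hTh : Tᴴ = T := hTpd.isHermitian
  have hTinv : (T⁻¹)ᴴ = T⁻¹ := hTpd.inv.isHermitian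
  have h1 : msqrt (S⁻¹) = T⁻¹ := msqrt_inv hS
  have h2 : (msqrt (S⁻¹))⁻¹ = T := by
    rw [h1, Matrix.nonsing_inv_nonsing_inv _ hTpd.det_pos.ne'.isUnit]
  have hTCTpd : (T * C * T).PosDef := by
    have := posDef_conj (B := T) hC hTpd.det_pos.ne'.isUnit
    rwa [hTh] at this
  set R : Matrix n n ℂ := msqrt (T * C * T) with hRdef
  have hRpd : R.PosDef := msqrt_posDef hTCTpd
  have hRR : R * R = T * C * T := msqrt_mul_self hTCTpd.posSemidef
  have hgm : geomMean S⁻¹ C = T⁻¹ * R * T⁻¹ := by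
    rw [geomMean, h2, h1, hRdef]
  constructor
  · rw [hgm]
    have := posDef_conj (B := T⁻¹) hRpd (hTpd.inv.det_pos.ne'.isUnit)
    rwa [hTinv] at this
  · rw [hgm]
    have hmid : T⁻¹ * R * T⁻¹ * S * (T⁻¹ * R * T⁻¹)
        = T⁻¹ * (R * (T⁻¹ * S * T⁻¹) * R) * T⁻¹ := by
      simp only [Matrix.mul_assoc]
    rw [hmid]
    have hTST : T⁻¹ * S * T⁻¹ = 1 := by
      rw [← hTT]
      calc T⁻¹ * (T * T) * T⁻¹ = (T⁻¹ * T) * (T * T⁻¹) := by simp only [Matrix.mul_assoc]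
        _ = 1 := by rw [inv_mul_self hTpd, mul_inv_self hTpd, Matrix.mul_one]
    rw [hTST, Matrix.mul_one, hRR]
    calc T⁻¹ * (T * C * T) * T⁻¹ = (T⁻¹ * T) * C * (T * T⁻¹) := by simp only [Matrix.mul_assoc]
      _ = C := by rw [inv_mul_self hTpd, mul_inv_self hTpd, Matrix.one_mul, Matrix.mul_one]

lemma kraus_trace_adj {H K : Type*} [Fintype H] [DecidableEq H] [Fintype K] [DecidableEq K]
    {m : ℕ} (Kr : Fin m → Matrix K H ℂ) (Q : Matrix H H ℂ) (M' : Matrix K K ℂ) :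
    (Q * ∑ a, (Kr a)ᴴ * M' * Kr a).trace = ((∑ a, Kr a * Q * (Kr a)ᴴ) * M').trace := by
  rw [Finset.mul_sum, Finset.sum_mul, Matrix.trace_sum, Matrix.trace_sum]
  refine Finset.sum_congr rfl fun a _ => ?_
  calc (Q * ((Kr a)ᴴ * M' * Kr a)).trace
      = ((Q * ((Kr a)ᴴ * M')) * Kr a).trace := by simp only [Matrix.mul_assoc]
    _ = (Kr a * (Q * ((Kr a)ᴴ * M'))).trace := Matrix.trace_mul_comm _ _
    _ = ((Kr a * Q * (Kr a)ᴴ) * M').trace := by simp only [Matrix.mul_assoc]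

end GammaAux
namespace GammaAux
lemma fidelity_def {n : Type*} [Fintype n] [DecidableEq n] (P Q : Matrix n n ℂ) :
    fidelity P Q = ((msqrt (msqrt Q * P * msqrt Q)).trace).re := rfl
end GammaAux

open GammaAux in
/-- For a quantum channel `Λ` with Kraus operators `Kr a`, a positive
definite input `P` with `Λ P` positive definite, and a positive definite target `C`,
let `M = (Λ P)⁻¹ # C` and `Γ = Λ†(M) P Λ†(M)` be the Gamma map. Then
(i) if every `Kr a * (Kr b)ᴴ` commutes with `M`, the Gamma map is feasible,
`Λ Γ = C`; and (ii) `Λ Γ = C` holds iff `Γ` is the unique maximizer of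
`Q ↦ F(P,Q)` over the feasible set `{Q PSD : Λ Q = C}`. -/
theorem gammaMap_feasible_and_projection
    {H K : Type*} [Fintype H] [DecidableEq H] [Fintype K] [DecidableEq K]
    {m : ℕ} (Kr : Fin m → Matrix K H ℂ)
    (hTP : ∑ a, (Kr a)ᴴ * Kr a = (1 : Matrix H H ℂ))
    (Λ : Matrix H H ℂ → Matrix K K ℂ)
    (hΛ : ∀ X, Λ X = ∑ a, Kr a * X * (Kr a)ᴴ)
    (Λadj : Matrix K K ℂ → Matrix H H ℂ)
    (hΛadj : ∀ Y, Λadj Y = ∑ a, (Kr a)ᴴ * Y * Kr a)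
    (P : Matrix H H ℂ) (hP : P.PosDef)
    (C : Matrix K K ℂ) (hC : C.PosDef)
    (hΛP : (Λ P).PosDef)
    (M : Matrix K K ℂ) (hM : M = geomMean (Λ P)⁻¹ C)
    (Γ : Matrix H H ℂ) (hΓ : Γ = Λadj M * P * Λadj M) :
    ((∀ a b, Commute (Kr a * (Kr b)ᴴ) M) → Λ Γ = C) ∧
    (Λ Γ = C ↔
      (Γ.PosSemidef ∧ Λ Γ = C ∧
        ∀ Q : Matrix H H ℂ, Q.PosSemidef → Λ Q = C →
          fidelity P Q ≤ fidelity P Γ ∧ (fidelity P Q = fidelity P Γ → Q = Γ))) := by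
  -- basic objects
  obtain ⟨hMpd, hMSM⟩ : M.PosDef ∧ M * Λ P * M = C := by
    rw [hM]; exact geom_riccati hΛP hC
  set N : Matrix H H ℂ := Λadj M with hNdef
  have hNsum : N = ∑ a, (Kr a)ᴴ * M * Kr a := hΛadj M
  have hNpd : N.PosDef := by rw [hNsum]; exact kraus_posDef Kr hTP hMpd
  have hNh : Nᴴ = N := hNpd.isHermitian
  have hΓ' : Γ = N * P * N := hΓ
  have hΓpd : Γ.PosDef := by
    rw [hΓ']
    have := posDef_conj (B := N) hP hNpd.det_pos.ne'.isUnit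
    rwa [hNh] at this
  -- part (i)
  have part1 : (∀ a b, Commute (Kr a * (Kr b)ᴴ) M) → Λ Γ = C := by
    intro hcomm
    have hKN : ∀ a, Kr a * N = M * Kr a := by
      intro a
      rw [hNsum, Matrix.mul_sum]
      have hterm : ∀ b, Kr a * ((Kr b)ᴴ * M * Kr b) = M * (Kr a * ((Kr b)ᴴ * Kr b)) := by
        intro b
        calc Kr a * ((Kr b)ᴴ * M * Kr b)
            = (Kr a * (Kr b)ᴴ * M) * Kr b := by simp only [Matrix.mul_assoc]
          _ = (M * (Kr a * (Kr b)ᴴ)) * Kr b := by rw [(hcomm a b).eq]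
          _ = M * (Kr a * ((Kr b)ᴴ * Kr b)) := by simp only [Matrix.mul_assoc]
      rw [Finset.sum_congr rfl fun b _ => hterm b, ← Matrix.mul_sum, ← Matrix.mul_sum, hTP,
        Matrix.mul_one]
    have hNK : ∀ a, N * (Kr a)ᴴ = (Kr a)ᴴ * M := by
      intro a
      have h0 := congrArg Matrix.conjTranspose (hKN a)
      rw [Matrix.conjTranspose_mul, Matrix.conjTranspose_mul, hNh,
        hMpd.isHermitian.eq] at h0
      exact h0
    rw [hΛ Γ]
    have hterm : ∀ a, Kr a * Γ * (Kr a)ᴴ = M * (Kr a * P * (Kr a)ᴴ) * M := by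
      intro a
      rw [hΓ']
      calc Kr a * (N * P * N) * (Kr a)ᴴ
          = (Kr a * N) * P * (N * (Kr a)ᴴ) := by simp only [Matrix.mul_assoc]
        _ = (M * Kr a) * P * ((Kr a)ᴴ * M) := by rw [hKN a, hNK a]
        _ = M * (Kr a * P * (Kr a)ᴴ) * M := by simp only [Matrix.mul_assoc]
    rw [Finset.sum_congr rfl fun a _ => hterm a]
    have hpull : ∑ a, M * (Kr a * P * (Kr a)ᴴ) * M
        = M * (∑ a, Kr a * P * (Kr a)ᴴ) * M := by
      rw [Matrix.mul_sum, Matrix.sum_mul]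
    rw [hpull, ← hΛ P, hMSM]
  refine ⟨part1, ?_, ?_⟩
  · -- forward direction of the iff
    intro hfeas
    refine ⟨hΓpd.posSemidef, hfeas, fun Q hQ hQC => ?_⟩
    -- notation
    set T : Matrix H H ℂ := msqrt P with hTdef
    have hTpd : T.PosDef := msqrt_posDef hP
    have hTT : T * T = P := msqrt_mul_self hP.posSemidef
    have hTh : Tᴴ = T := hTpd.isHermitian
    have hTinv : (T⁻¹)ᴴ = T⁻¹ := hTpd.inv.isHermitian
    -- fidelity P Γ = (P * N).trace.re
    have hfidΓ : fidelity P Γ = (P * N).trace.re := by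
      have hXX : (T * msqrt Γ)ᴴ * (T * msqrt Γ) = msqrt Γ * P * msqrt Γ := by
        rw [Matrix.conjTranspose_mul, hTh, msqrt_herm hΓpd.posSemidef]
        calc msqrt Γ * T * (T * msqrt Γ) = msqrt Γ * (T * T) * msqrt Γ := by
              simp only [Matrix.mul_assoc]
          _ = msqrt Γ * P * msqrt Γ := by rw [hTT]
      have hXXop : (T * msqrt Γ) * (T * msqrt Γ)ᴴ = T * Γ * T := by
        rw [Matrix.conjTranspose_mul, hTh, msqrt_herm hΓpd.posSemidef]
        calc T * msqrt Γ * (msqrt Γ * T) = T * (msqrt Γ * msqrt Γ) * T := by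
              simp only [Matrix.mul_assoc]
          _ = T * Γ * T := by rw [msqrt_mul_self hΓpd.posSemidef]
      have hsym := trace_msqrt_sym (T * msqrt Γ)
      rw [hXX, hXXop] at hsym
      set V : Matrix H H ℂ := T * N * T with hV
      have hVpd : V.PosDef := by
        rw [hV]
        have := posDef_conj (B := T) hNpd hTpd.det_pos.ne'.isUnit
        rwa [hTh] at this
      have hTΓT : T * Γ * T = V * V := by
        rw [hΓ', hV]
        calc T * (N * P * N) * T = T * (N * (T * T) * N) * T := by rw [hTT]
          _ = (T * N * T) * (T * N * T) := by simp only [Matrix.mul_assoc]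
      have hmsqV : msqrt (T * Γ * T) = V := by
        rw [hTΓT]
        exact msqrt_unique hVpd.posSemidef rfl
      have htrV : V.trace = (P * N).trace := by
        rw [hV, Matrix.trace_mul_cycle, hTT]
      rw [fidelity_def, hsym, hmsqV, htrV]
    -- fidelity P Q = (msqrt (T * Q * T)).trace.re
    set A : Matrix H H ℂ := T * Q * T with hA
    have hApsd : A.PosSemidef := by
      rw [hA]
      have := hQ.conjTranspose_mul_mul_same T
      rwa [hTh] at this
    have hfidQ : fidelity P Q = (msqrt A).trace.re := by
      have hXX : (T * msqrt Q)ᴴ * (T * msqrt Q) = msqrt Q * P * msqrt Q := by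
        rw [Matrix.conjTranspose_mul, hTh, msqrt_herm hQ]
        calc msqrt Q * T * (T * msqrt Q) = msqrt Q * (T * T) * msqrt Q := by
              simp only [Matrix.mul_assoc]
          _ = msqrt Q * P * msqrt Q := by rw [hTT]
      have hXXop : (T * msqrt Q) * (T * msqrt Q)ᴴ = A := by
        rw [Matrix.conjTranspose_mul, hTh, msqrt_herm hQ, hA]
        calc T * msqrt Q * (msqrt Q * T) = T * (msqrt Q * msqrt Q) * T := by
              simp only [Matrix.mul_assoc]
          _ = T * Q * T := by rw [msqrt_mul_self hQ]
      have hsym := trace_msqrt_sym (T * msqrt Q)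
      rw [hXX, hXXop] at hsym
      rw [fidelity_def, hsym]
    -- the weight matrix
    set W' : Matrix H H ℂ := T⁻¹ * N⁻¹ * T⁻¹ with hW'
    have hW'pd : W'.PosDef := by
      rw [hW']
      have := posDef_conj (B := T⁻¹) hNpd.inv hTpd.inv.det_pos.ne'.isUnit
      rwa [hTinv] at this
    have hW'inv : W'⁻¹ = T * N * T := by
      apply Matrix.inv_eq_right_inv
      rw [hW']
      calc T⁻¹ * N⁻¹ * T⁻¹ * (T * N * T)
          = T⁻¹ * (N⁻¹ * ((T⁻¹ * T) * N)) * T := by simp only [Matrix.mul_assoc]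
        _ = T⁻¹ * (N⁻¹ * N) * T := by rw [inv_mul_self hTpd, Matrix.one_mul]
        _ = T⁻¹ * T := by rw [inv_mul_self hNpd, Matrix.mul_one]
        _ = 1 := inv_mul_self hTpd
    have htrAW' : (A * W').trace = (Q * N⁻¹).trace := by
      have h1 : A * W' = T * (Q * (N⁻¹ * T⁻¹)) := by
        rw [hA, hW']
        calc T * Q * T * (T⁻¹ * N⁻¹ * T⁻¹)
            = T * (Q * ((T * T⁻¹) * (N⁻¹ * T⁻¹))) := by simp only [Matrix.mul_assoc]
          _ = T * (Q * (N⁻¹ * T⁻¹)) := by rw [mul_inv_self hTpd, Matrix.one_mul]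
      rw [h1, Matrix.trace_mul_comm]
      calc (Q * (N⁻¹ * T⁻¹) * T).trace = (Q * (N⁻¹ * (T⁻¹ * T))).trace := by
            simp only [Matrix.mul_assoc]
        _ = (Q * N⁻¹).trace := by rw [inv_mul_self hTpd, Matrix.mul_one]
    have htrW'inv : (W'⁻¹).trace = (P * N).trace := by
      rw [hW'inv, Matrix.trace_mul_cycle, hTT]
    -- q ≤ f
    have hqf : (Q * N⁻¹).trace.re ≤ (P * N).trace.re := by
      have hch : ((Λadj (M⁻¹)) - N⁻¹).PosSemidef := by
        rw [hΛadj M⁻¹, hNsum]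
        exact choi Kr hTP hMpd
      have h0 : 0 ≤ (Q * (Λadj (M⁻¹) - N⁻¹)).trace.re := trace_mul_psd_nonneg hQ hch
      rw [Matrix.mul_sub, Matrix.trace_sub, Complex.sub_re] at h0
      have h2 : (Q * Λadj (M⁻¹)).trace = (P * N).trace := by
        calc (Q * Λadj (M⁻¹)).trace = ((∑ a, Kr a * Q * (Kr a)ᴴ) * M⁻¹).trace := by
              rw [hΛadj M⁻¹]; exact kraus_trace_adj Kr Q M⁻¹
          _ = (C * M⁻¹).trace := by rw [← hΛ Q, hQC]
          _ = (M * Λ P).trace := by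
              rw [← hMSM]
              calc (M * Λ P * M * M⁻¹).trace = (M * Λ P * (M * M⁻¹)).trace := by
                    simp only [Matrix.mul_assoc]
                _ = (M * Λ P).trace := by rw [mul_inv_self hMpd, Matrix.mul_one]
          _ = (P * N).trace := by
              rw [Matrix.trace_mul_comm, hΛ P, ← kraus_trace_adj Kr P M, ← hNsum]
      rw [h2] at h0
      linarith
    obtain ⟨hle, heqc⟩ := lemA hApsd hW'pd
    constructor
    · rw [hfidQ, hfidΓ]
      calc (msqrt A).trace.re ≤ ((A * W').trace.re + (W'⁻¹).trace.re) / 2 := hle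
        _ = ((Q * N⁻¹).trace.re + (P * N).trace.re) / 2 := by rw [htrAW', htrW'inv]
        _ ≤ (P * N).trace.re := by linarith
    · intro hfe
      have hmax : (msqrt A).trace.re = (P * N).trace.re := by
        rw [← hfidQ, hfe, hfidΓ]
      have heq2 : (msqrt A).trace.re = ((A * W').trace.re + (W'⁻¹).trace.re) / 2 := by
        apply le_antisymm hle
        rw [htrAW', htrW'inv, hmax]
        linarith
      have hWA := heqc heq2
      rw [hW'inv] at hWA
      -- square both sides
      have hsq : T * Γ * T = A := by
        have h1 : (T * N * T) * (T * N * T) = msqrt A * msqrt A := by rw [hWA]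
        rw [msqrt_mul_self hApsd] at h1
        rw [← h1, hΓ']
        calc T * (N * P * N) * T = T * (N * (T * T) * N) * T := by rw [hTT]
          _ = (T * N * T) * (T * N * T) := by simp only [Matrix.mul_assoc]
      rw [hA] at hsq
      have hc := congrArg (fun X => T⁻¹ * X * T⁻¹) hsq
      simp only [Matrix.mul_assoc] at hc
      rw [mul_inv_self hTpd] at hc
      simp only [Matrix.mul_one] at hc
      simp only [← Matrix.mul_assoc] at hc
      rw [inv_mul_self hTpd] at hc
      simp only [Matrix.one_mul] at hc
      exact hc.symm
  · rintro ⟨_, h, _⟩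
    exact h
end
end

section
/- Let Θ be a completely positive map from matrices over 𝒳 to matrices over 𝒴 (its Choi matrix 𝔠(Θ) is PSD) such that R := Θ†(I_𝒴) is positive definite, where Θ† is the Hilbert–Schmidt adjoint. Then: (i) there exists a unique pair (R', Φ) with R' positive definite and Φ a quantum channel (CP and trace-preserving) such that Θ(X) = Φ(R'^{1/2} X R'^{1/2}) for all X, and moreover R' = R; and (ii) the Choi matrix of this channel component Φ is the unique Bures projection of 𝔠(Θ) onto the set {M PSD on 𝒳⊗𝒴 : Tr_𝒴[M] = I_𝒳} of Choi matrices of quantum channels, given explicitly by 𝔠(Φ) = (A ⊗ I_𝒴) 𝔠(Θ) (A ⊗ I_𝒴) with A = ([𝔠(Θ)]_𝒳)^{-1/2}, where [𝔠(Θ)]_𝒳 := Tr_𝒴[𝔠(Θ)]. -/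
open Matrix Kronecker
open scoped ComplexOrder

noncomputable section

/-- The Choi matrix of a map `Φ` from matrices over `𝒳` to matrices over `𝒴`:
`𝔠(Φ) = ∑ i j, |i⟩⟨j| ⊗ Φ(|i⟩⟨j|)`. -/
noncomputable def choi {X Y : Type*} [DecidableEq X]
    (Φ : Matrix X X ℂ → Matrix Y Y ℂ) : Matrix (X × Y) (X × Y) ℂ :=
  Matrix.of fun p q => Φ (Matrix.single p.1 q.1 1) p.2 q.2

/-- Partial trace over the output (second) factor `𝒴`. -/
noncomputable def ptraceY {X Y : Type*} [Fintype Y]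
    (M : Matrix (X × Y) (X × Y) ℂ) : Matrix X X ℂ :=
  Matrix.of fun x x' => ∑ y : Y, M (x, y) (x', y)


set_option linter.unusedSectionVars false
set_option maxHeartbeats 1000000

section aux
variable {n : Type*} [Fintype n] [DecidableEq n] {A B : Matrix n n ℂ}
open scoped MatrixOrder

lemma msqrt_eq_cfc (h : A.PosSemidef) : msqrt A = CFC.sqrt A := by
  rw [msqrt, dif_pos h, CFC.sqrt_eq_cfc, cfc_nnreal_eq_real _ A, h.1.cfc_eq, IsHermitian.cfc,
    Unitary.conjStarAlgAut_apply]
  congr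
  funext x
  rw [Real.sqrt]

lemma msqrt_posSemidef (h : A.PosSemidef) : (msqrt A).PosSemidef := by
  rw [msqrt_eq_cfc h]; exact (CFC.sqrt_nonneg A).posSemidef

lemma msqrt_mul_self (h : A.PosSemidef) : msqrt A * msqrt A = A := by
  rw [msqrt_eq_cfc h]; exact CFC.sqrt_mul_sqrt_self A h.nonneg

lemma msqrt_herm (h : A.PosSemidef) : (msqrt A)ᴴ = msqrt A := (msqrt_posSemidef h).1

lemma eq_msqrt (hA : A.PosSemidef) (hB : B.PosSemidef) (hAB : A * A = B) : A = msqrt B := by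
  rw [msqrt_eq_cfc hB]; exact (CFC.sqrt_unique hAB hA.nonneg).symm

lemma msqrt_det_isUnit (h : A.PosSemidef) (hdet : IsUnit A.det) : IsUnit (msqrt A).det := by
  have h2 : (msqrt A).det * (msqrt A).det = A.det := by
    rw [← det_mul, msqrt_mul_self h]
  exact isUnit_of_mul_isUnit_left (h2.symm ▸ hdet)

lemma msqrt_inv_herm (h : A.PosSemidef) : ((msqrt A)⁻¹)ᴴ = (msqrt A)⁻¹ := by
  rw [conjTranspose_nonsing_inv, msqrt_herm h]

end aux

section tracelem
set_option linter.unusedSectionVars false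
variable {n : Type*} [Fintype n] [DecidableEq n]

lemma trace_cms_re (M : Matrix n n ℂ) :
    (Mᴴ * M).trace.re = ∑ j, ∑ i, Complex.normSq (M i j) := by
  rw [Matrix.trace]
  rw [Complex.re_sum]
  refine Finset.sum_congr rfl fun j _ => ?_
  rw [Matrix.diag_apply, Matrix.mul_apply, Complex.re_sum]
  refine Finset.sum_congr rfl fun i _ => ?_
  rw [Matrix.conjTranspose_apply]
  simp [Complex.normSq_apply, Complex.mul_re]

lemma trace_cms_re_nonneg (M : Matrix n n ℂ) : 0 ≤ (Mᴴ * M).trace.re := by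
  rw [trace_cms_re]
  apply Finset.sum_nonneg; intro j _; apply Finset.sum_nonneg; intro i _; exact Complex.normSq_nonneg _

lemma eq_of_trace_cms_re_eq_zero {M : Matrix n n ℂ} (h : (Mᴴ * M).trace.re = 0) : M = 0 := by
  rw [trace_cms_re] at h
  ext i j
  have h1 : ∀ j ∈ Finset.univ, (0:ℝ) ≤ ∑ i, Complex.normSq (M i j) := by
    intro j _; exact Finset.sum_nonneg fun i _ => Complex.normSq_nonneg _
  have h2 := (Finset.sum_eq_zero_iff_of_nonneg h1).mp h j (Finset.mem_univ j)
  have h3 : ∀ i ∈ Finset.univ, (0:ℝ) ≤ Complex.normSq (M i j) := by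
    intro i _; exact Complex.normSq_nonneg _
  have h4 := (Finset.sum_eq_zero_iff_of_nonneg h3).mp h2 i (Finset.mem_univ i)
  simpa using Complex.normSq_eq_zero.mp h4

/-- Parallelogram-style identity on Hilbert–Schmidt inner products. -/
lemma trace_sub_expand (X Y : Matrix n n ℂ) :
    ((X - Y)ᴴ * (X - Y)).trace.re
      = (Xᴴ * X).trace.re + (Yᴴ * Y).trace.re - 2 * (Xᴴ * Y).trace.re := by
  have hYX : (Yᴴ * X).trace = star ((Xᴴ * Y).trace) := by
    rw [← Matrix.trace_conjTranspose]
    congr 1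
    rw [Matrix.conjTranspose_mul, Matrix.conjTranspose_conjTranspose]
  have : (X - Y)ᴴ * (X - Y) = Xᴴ * X - Xᴴ * Y - Yᴴ * X + Yᴴ * Y := by
    rw [Matrix.conjTranspose_sub]; noncomm_ring
  rw [this]
  simp only [Matrix.trace_add, Matrix.trace_sub, Complex.add_re, Complex.sub_re, hYX,
    Complex.star_def, Complex.conj_re]
  ring

lemma re_trace_inner_le (X Y : Matrix n n ℂ) :
    2 * (Xᴴ * Y).trace.re ≤ (Xᴴ * X).trace.re + (Yᴴ * Y).trace.re := by
  have := trace_cms_re_nonneg (X - Y)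
  rw [trace_sub_expand] at this
  linarith

lemma eq_of_re_trace_inner_eq (X Y : Matrix n n ℂ)
    (h : 2 * (Xᴴ * Y).trace.re = (Xᴴ * X).trace.re + (Yᴴ * Y).trace.re) : X = Y := by
  have h2 : ((X - Y)ᴴ * (X - Y)).trace.re = 0 := by rw [trace_sub_expand]; linarith
  have := eq_of_trace_cms_re_eq_zero h2
  rwa [sub_eq_zero] at this

end tracelem

section polar
open scoped InnerProductSpace
variable {n : Type*} [Fintype n] [DecidableEq n]
lemma toEuclideanLin_mul_apply (A B : Matrix n n ℂ) (x : EuclideanSpace ℂ n) :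
    Matrix.toEuclideanLin (A * B) x = Matrix.toEuclideanLin A (Matrix.toEuclideanLin B x) := by
  simp [Matrix.toEuclideanLin_apply, Matrix.mulVec_mulVec]

lemma exists_unitary_polar (M : Matrix n n ℂ) :
    ∃ U : Matrix n n ℂ, Uᴴ * U = 1 ∧ M = U * msqrt (Mᴴ * M) := by
  set T := msqrt (Mᴴ * M) with hTdef
  have hpsd : (Mᴴ * M).PosSemidef := Matrix.posSemidef_conjTranspose_mul_self M
  have hTpsd := msqrt_posSemidef hpsd
  have hTh : Tᴴ = T := hTpsd.1
  have hTT : T * T = Mᴴ * M := msqrt_mul_self hpsd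
  set E := EuclideanSpace ℂ n
  let m : E →ₗ[ℂ] E := Matrix.toEuclideanLin M
  let t : E →ₗ[ℂ] E := Matrix.toEuclideanLin T
  have hadjrw : ∀ (A : Matrix n n ℂ) (x y : E),
      ⟪Matrix.toEuclideanLin A x, y⟫_ℂ = ⟪x, Matrix.toEuclideanLin Aᴴ y⟫_ℂ := by
    intro A x y
    rw [Matrix.toEuclideanLin_conjTranspose_eq_adjoint, LinearMap.adjoint_inner_right]
  have hinner : ∀ x : E, ⟪m x, m x⟫_ℂ = ⟪t x, t x⟫_ℂ := by
    intro x
    rw [hadjrw M x (m x), hadjrw T x (t x), hTh]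
    rw [show Matrix.toEuclideanLin Mᴴ (m x) = Matrix.toEuclideanLin (Mᴴ * M) x from
      (toEuclideanLin_mul_apply Mᴴ M x).symm]
    rw [show Matrix.toEuclideanLin T (t x) = Matrix.toEuclideanLin (T * T) x from
      (toEuclideanLin_mul_apply T T x).symm]
    rw [hTT]
  have hnorm : ∀ x : E, ‖m x‖ = ‖t x‖ := by
    intro x
    have h1 := hinner x
    rw [inner_self_eq_norm_sq_to_K (𝕜 := ℂ), inner_self_eq_norm_sq_to_K (𝕜 := ℂ)] at h1
    have h2 : (‖m x‖ : ℝ) ^ 2 = (‖t x‖ : ℝ) ^ 2 := by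
      exact_mod_cast h1
    exact (sq_eq_sq₀ (norm_nonneg _) (norm_nonneg _)).mp h2
  have hker : LinearMap.ker t ≤ LinearMap.ker m := by
    intro x hx
    rw [LinearMap.mem_ker] at hx ⊢
    have := hnorm x
    rw [hx, norm_zero, norm_eq_zero] at this
    exact this
  let L0 : LinearMap.range t →ₗ[ℂ] E :=
    ((LinearMap.ker t).liftQ m hker).comp t.quotKerEquivRange.symm.toLinearMap
  have hL0 : ∀ x : E, L0 ⟨t x, LinearMap.mem_range_self t x⟩ = m x := by
    intro x
    have h2 := t.quotKerEquivRange_symm_apply_image x (LinearMap.mem_range_self t x)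
    simp only [L0, LinearMap.comp_apply, LinearEquiv.coe_toLinearMap, h2,
      Submodule.mkQ_apply, Submodule.liftQ_apply]
  have hL0norm : ∀ s : LinearMap.range t, ‖L0 s‖ = ‖s‖ := by
    rintro ⟨s, hs⟩
    obtain ⟨x, rfl⟩ := hs
    rw [hL0 x]
    exact hnorm x
  let L : LinearMap.range t →ₗᵢ[ℂ] E := ⟨L0, hL0norm⟩
  let u : E →ₗᵢ[ℂ] E := L.extend
  have hu : ∀ x : E, u (t x) = m x := by
    intro x
    have h3 := L.extend_apply ⟨t x, LinearMap.mem_range_self t x⟩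
    calc u (t x) = L.extend ↑(⟨t x, LinearMap.mem_range_self t x⟩ : LinearMap.range t) := rfl
      _ = L ⟨t x, LinearMap.mem_range_self t x⟩ := h3
      _ = m x := hL0 x
  let U : Matrix n n ℂ := Matrix.toEuclideanLin.symm u.toLinearMap
  have hU : Matrix.toEuclideanLin U = u.toLinearMap := Matrix.toEuclideanLin.apply_symm_apply _
  refine ⟨U, ?_, ?_⟩
  · apply Matrix.toEuclideanLin.injective
    apply LinearMap.ext
    intro x
    rw [toEuclideanLin_mul_apply, Matrix.toEuclideanLin_conjTranspose_eq_adjoint, hU]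
    apply ext_inner_left ℂ
    intro v
    rw [LinearMap.adjoint_inner_right]
    simp only [LinearIsometry.coe_toLinearMap]
    rw [u.inner_map_map]
    have : Matrix.toEuclideanLin (1 : Matrix n n ℂ) x = x := by
      simp [Matrix.toEuclideanLin_apply, Matrix.one_mulVec]
    rw [this]
  · apply Matrix.toEuclideanLin.injective
    apply LinearMap.ext
    intro x
    rw [toEuclideanLin_mul_apply, hU]
    exact (hu x).symm

end polar

section fidelitylem
set_option maxHeartbeats 1000000
variable {n : Type*} [Fintype n] [DecidableEq n]

lemma fidelity_opt (C G : Matrix n n ℂ) (hC : C.PosSemidef) (hG : G.PosSemidef)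
    (hdet : IsUnit G.det) :
    fidelity C (G * C * G) = (G * C).trace.re := by
  have hGH : Gᴴ = G := hG.1
  have hC' : (G * C * G).PosSemidef := by
    have := hC.mul_mul_conjTranspose_same G
    rwa [hGH] at this
  set D := msqrt (G * C * G) with hD
  have hDpsd := msqrt_posSemidef hC'
  have hDH : Dᴴ = D := hDpsd.1
  have hDD : D * D = G * C * G := msqrt_mul_self hC'
  have hGG : G * G⁻¹ = 1 := mul_nonsing_inv _ hdet
  have hGG' : G⁻¹ * G = 1 := nonsing_inv_mul _ hdet
  have hDCD : (D * C * D).PosSemidef := by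
    have := hC.mul_mul_conjTranspose_same D
    rwa [hDH] at this
  have hDGD : (D * G⁻¹ * D).PosSemidef := by
    have := hG.inv.mul_mul_conjTranspose_same D
    rwa [hDH] at this
  have hsq : (D * G⁻¹ * D) * (D * G⁻¹ * D) = D * C * D := by
    have h1 : (D * G⁻¹ * D) * (D * G⁻¹ * D) = D * (G⁻¹ * ((D * D) * (G⁻¹ * D))) := by
      simp only [Matrix.mul_assoc]
    rw [h1, hDD]
    have h2 : G⁻¹ * ((G * C * G) * (G⁻¹ * D)) = C * D := by
      calc G⁻¹ * ((G * C * G) * (G⁻¹ * D)) = (G⁻¹ * G) * (C * ((G * G⁻¹) * D)) := by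
            simp only [Matrix.mul_assoc]
        _ = C * D := by rw [hGG, hGG', Matrix.one_mul, Matrix.one_mul]
    rw [h2, ← Matrix.mul_assoc]
  have hkey : msqrt (D * C * D) = D * G⁻¹ * D := (eq_msqrt hDGD hDCD hsq).symm
  have htr : (D * G⁻¹ * D).trace = (G * C).trace := by
    calc (D * G⁻¹ * D).trace = (D * (G⁻¹ * D)).trace := by rw [Matrix.mul_assoc]
      _ = ((G⁻¹ * D) * D).trace := Matrix.trace_mul_comm _ _
      _ = (G⁻¹ * (D * D)).trace := by rw [Matrix.mul_assoc]
      _ = (G⁻¹ * (G * C * G)).trace := by rw [hDD]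
      _ = ((G⁻¹ * G) * (C * G)).trace := by simp only [Matrix.mul_assoc]
      _ = (C * G).trace := by rw [hGG', Matrix.one_mul]
      _ = (G * C).trace := Matrix.trace_mul_comm C G
  rw [fidelity, ← hD, hkey, htr]

lemma fidelity_bound (C G N : Matrix n n ℂ)
    (hC : C.PosSemidef) (hG : G.PosSemidef) (hdet : IsUnit G.det) (hN : N.PosSemidef) :
    2 * fidelity C N ≤ (G * C).trace.re + (G⁻¹ * N).trace.re ∧
      (2 * fidelity C N = (G * C).trace.re + (G⁻¹ * N).trace.re → N = G * C * G) := by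
  have hGH : Gᴴ = G := hG.1
  set sC := msqrt C with hsC
  set sN := msqrt N with hsN
  set sG := msqrt G with hsG
  have hsCpsd := msqrt_posSemidef hC
  have hsNpsd := msqrt_posSemidef hN
  have hsGpsd := msqrt_posSemidef hG
  have hsCH : sCᴴ = sC := hsCpsd.1
  have hsNH : sNᴴ = sN := hsNpsd.1
  have hsGH : sGᴴ = sG := hsGpsd.1
  have hsCC : sC * sC = C := msqrt_mul_self hC
  have hsNN : sN * sN = N := msqrt_mul_self hN
  have hsGG : sG * sG = G := msqrt_mul_self hG
  have hsGdet : IsUnit sG.det := msqrt_det_isUnit hG hdet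
  have hsGinv : sG * sG⁻¹ = 1 := mul_nonsing_inv _ hsGdet
  have hsGinv' : sG⁻¹ * sG = 1 := nonsing_inv_mul _ hsGdet
  have hsGinvH : (sG⁻¹)ᴴ = sG⁻¹ := by rw [conjTranspose_nonsing_inv, hsGH]
  have hGinv : sG⁻¹ * sG⁻¹ = G⁻¹ := by rw [← hsGG, Matrix.mul_inv_rev]
  -- polar decomposition of sC * sN
  have hH : (sC * sN)ᴴ * (sC * sN) = sN * C * sN := by
    rw [Matrix.conjTranspose_mul, hsCH, hsNH]
    calc (sN * sC) * (sC * sN) = sN * ((sC * sC) * sN) := by simp only [Matrix.mul_assoc]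
      _ = sN * C * sN := by rw [hsCC, Matrix.mul_assoc]
  obtain ⟨U, hUU, hpol⟩ := exists_unitary_polar (sC * sN)
  rw [hH] at hpol
  have hUUt : U * Uᴴ = 1 := mul_eq_one_comm.mp hUU
  have hsqrtH : msqrt (sN * C * sN) = Uᴴ * (sC * sN) := by
    rw [hpol, ← Matrix.mul_assoc, hUU, Matrix.one_mul]
  set X₀ := sG * sC * U with hX₀
  set Y₀ := sG⁻¹ * sN with hY₀
  have hX₀H : X₀ᴴ = Uᴴ * (sC * sG) := by
    rw [hX₀]; simp only [Matrix.conjTranspose_mul, hsCH, hsGH, Matrix.mul_assoc]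
  have hXY : X₀ᴴ * Y₀ = Uᴴ * (sC * sN) := by
    rw [hX₀H, hY₀]
    calc Uᴴ * (sC * sG) * (sG⁻¹ * sN) = Uᴴ * (sC * ((sG * sG⁻¹) * sN)) := by
          simp only [Matrix.mul_assoc]
      _ = Uᴴ * (sC * sN) := by rw [hsGinv, Matrix.one_mul]
  have hfid : fidelity C N = (X₀ᴴ * Y₀).trace.re := by
    rw [fidelity, hsqrtH, ← hXY]
  have hXX : (X₀ᴴ * X₀).trace = (G * C).trace := by
    have e1 : X₀ᴴ * X₀ = Uᴴ * ((sC * (G * sC)) * U) := by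
      rw [hX₀H, hX₀]
      calc Uᴴ * (sC * sG) * (sG * sC * U)
          = Uᴴ * ((sC * ((sG * sG) * sC)) * U) := by simp only [Matrix.mul_assoc]
        _ = Uᴴ * ((sC * (G * sC)) * U) := by rw [hsGG]
    rw [e1]
    calc (Uᴴ * ((sC * (G * sC)) * U)).trace
        = (((sC * (G * sC)) * U) * Uᴴ).trace := Matrix.trace_mul_comm _ _
      _ = ((sC * (G * sC)) * (U * Uᴴ)).trace := by rw [Matrix.mul_assoc]
      _ = (sC * (G * sC)).trace := by rw [hUUt, Matrix.mul_one]
      _ = ((G * sC) * sC).trace := Matrix.trace_mul_comm _ _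
      _ = (G * (sC * sC)).trace := by rw [Matrix.mul_assoc]
      _ = (G * C).trace := by rw [hsCC]
  have hYY : (Y₀ᴴ * Y₀).trace = (G⁻¹ * N).trace := by
    rw [hY₀, Matrix.conjTranspose_mul, hsNH, hsGinvH]
    calc ((sN * sG⁻¹) * (sG⁻¹ * sN)).trace = (sN * ((sG⁻¹ * sG⁻¹) * sN)).trace := by
          simp only [Matrix.mul_assoc]
      _ = (sN * (G⁻¹ * sN)).trace := by rw [hGinv]
      _ = ((G⁻¹ * sN) * sN).trace := by rw [Matrix.trace_mul_comm]
      _ = (G⁻¹ * (sN * sN)).trace := by rw [Matrix.mul_assoc]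
      _ = (G⁻¹ * N).trace := by rw [hsNN]
  constructor
  · have := re_trace_inner_le X₀ Y₀
    rw [hXX, hYY] at this
    rw [hfid]; linarith
  · intro heq
    rw [hfid] at heq
    have hXeqY : X₀ = Y₀ := by
      apply eq_of_re_trace_inner_eq
      rw [hXX, hYY]; linarith
    have hsNeq : sN = G * sC * U := by
      have h1 : sG * Y₀ = sN := by
        rw [hY₀, ← Matrix.mul_assoc, hsGinv, Matrix.one_mul]
      rw [← h1, ← hXeqY, hX₀]
      calc sG * (sG * sC * U) = (sG * sG) * (sC * U) := by simp only [Matrix.mul_assoc]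
        _ = G * sC * U := by rw [hsGG, Matrix.mul_assoc]
    have : N = G * C * G := by
      have h2 : N = sN * sNᴴ := by rw [hsNH, hsNN]
      rw [h2, hsNeq]
      simp only [Matrix.conjTranspose_mul, hsCH, hGH]
      calc (G * sC * U) * (Uᴴ * (sC * G)) = G * (sC * ((U * Uᴴ) * (sC * G))) := by
            simp only [Matrix.mul_assoc]
        _ = G * (sC * (sC * G)) := by rw [hUUt, Matrix.one_mul]
        _ = (G * (sC * sC)) * G := by simp only [Matrix.mul_assoc]
        _ = G * C * G := by rw [hsCC]
    exact this
end fidelitylem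

section kron
variable {X Y : Type*} [Fintype X] [DecidableEq X] [Fintype Y] [DecidableEq Y]

lemma trace_mul_stdBasis (K : Matrix X X ℂ) (x x' : X) :
    (K * Matrix.single x x' (1:ℂ)).trace = K x' x := by
  simp [Matrix.trace, Matrix.diag, Matrix.mul_apply, Matrix.single, Matrix.of_apply,
    mul_ite, mul_one, mul_zero, ite_and, Finset.sum_ite_eq, Finset.sum_ite_eq']

lemma mul_stdBasis_mul (P Q : Matrix X X ℂ) (x x' a b : X) :
    (P * Matrix.single x x' (1:ℂ) * Q) a b = P a x * Q x' b := by
  simp [Matrix.mul_apply, Matrix.single, Matrix.of_apply,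
    mul_ite, mul_one, mul_zero, ite_and, Finset.sum_ite_eq, Finset.sum_ite_eq',
    ite_mul, zero_mul, Finset.sum_mul]

lemma kron_one_conjT (K : Matrix X X ℂ) :
    (K ⊗ₖ (1 : Matrix Y Y ℂ))ᴴ = Kᴴ ⊗ₖ 1 := by
  ext p q
  simp [Matrix.conjTranspose_apply, Matrix.kroneckerMap_apply, Matrix.one_apply,
    apply_ite (starRingEnd ℂ), eq_comm]

lemma kron_one_mul_kron_one (K L : Matrix X X ℂ) :
    (K ⊗ₖ (1 : Matrix Y Y ℂ)) * (L ⊗ₖ 1) = (K * L) ⊗ₖ 1 := by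
  rw [← Matrix.mul_kronecker_mul, Matrix.one_mul]

lemma trace_kron_one_mul (K : Matrix X X ℂ) (N : Matrix (X × Y) (X × Y) ℂ) :
    ((K ⊗ₖ (1 : Matrix Y Y ℂ)) * N).trace = (K * ptraceY N).trace := by
  simp only [Matrix.trace, Matrix.diag_apply, Matrix.mul_apply, Matrix.kroneckerMap_apply,
    Matrix.one_apply, Fintype.sum_prod_type, ptraceY, Matrix.of_apply, mul_ite, ite_mul,
    mul_one, mul_zero, zero_mul, Finset.sum_ite_eq, Finset.sum_ite_eq', Finset.mul_sum,
    Finset.mem_univ, if_true]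
  exact Finset.sum_congr rfl fun x _ => Finset.sum_comm

lemma kron_conj_entry (K : Matrix X X ℂ) (Cm : Matrix (X × Y) (X × Y) ℂ) (p q : X × Y) :
    ((Kᵀ ⊗ₖ (1 : Matrix Y Y ℂ)) * Cm * (Kᵀ ⊗ₖ (1 : Matrix Y Y ℂ))) p q
      = ∑ a, ∑ b, K a p.1 * K q.1 b * Cm (a, p.2) (b, q.2) := by
  simp only [Matrix.mul_apply, Matrix.kroneckerMap_apply, Matrix.one_apply,
    Matrix.transpose_apply, Fintype.sum_prod_type, mul_ite, ite_mul, mul_one, mul_zero,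
    zero_mul, Finset.sum_ite_eq, Finset.sum_ite_eq', Finset.mul_sum, Finset.sum_mul,
    Finset.mem_univ, if_true]
  rw [Finset.sum_comm]
  exact Finset.sum_congr rfl fun a _ => Finset.sum_congr rfl fun b _ => by ring

lemma kron_one_psd {X Y : Type*} [Fintype X] [DecidableEq X] [Fintype Y] [DecidableEq Y]
    {K : Matrix X X ℂ} (hK : K.PosSemidef) :
    (K ⊗ₖ (1 : Matrix Y Y ℂ)).PosSemidef := by
  have h1 : K ⊗ₖ (1 : Matrix Y Y ℂ) = (msqrt K ⊗ₖ (1 : Matrix Y Y ℂ))ᴴ * (msqrt K ⊗ₖ (1 : Matrix Y Y ℂ)) := by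
    rw [kron_one_conjT, msqrt_herm hK, kron_one_mul_kron_one, msqrt_mul_self hK]
  rw [h1]
  exact Matrix.posSemidef_conjTranspose_mul_self _

end kron


/-- **Prior–channel decomposition.** Let `Θ` be a CP map with
Hilbert–Schmidt adjoint `Θadj` such that `R = Θadj 1` is positive definite. Then there
is a unique pair `(R', Φ)` of a positive definite prior and a quantum channel with
`Θ(X) = Φ(R'^{1/2} X R'^{1/2})`, necessarily `R' = R`; moreover the Choi matrix of the
channel component `Φ` equals `(A ⊗ I) 𝔠(Θ) (A ⊗ I)` with `A = (Tr_𝒴 𝔠(Θ))^{-1/2}` and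
it is the unique Bures projection of `𝔠(Θ)` onto `{M PSD : Tr_𝒴 M = I}`. -/
theorem prior_channel_decomposition
    {X Y : Type*} [Fintype X] [DecidableEq X] [Fintype Y] [DecidableEq Y]
    (Θ : Matrix X X ℂ →ₗ[ℂ] Matrix Y Y ℂ)
    (hCP : (choi fun M => Θ M).PosSemidef)
    (Θadj : Matrix Y Y ℂ → Matrix X X ℂ)
    (hadj : ∀ (A : Matrix X X ℂ) (B : Matrix Y Y ℂ),
      (Bᴴ * Θ A).trace = ((Θadj B)ᴴ * A).trace)
    (hR : (Θadj 1).PosDef) :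
    ∃ Φ : Matrix X X ℂ →ₗ[ℂ] Matrix Y Y ℂ,
      (choi fun M => Φ M).PosSemidef ∧ (∀ M, (Φ M).trace = M.trace) ∧
      (∀ M, Θ M = Φ (msqrt (Θadj 1) * M * msqrt (Θadj 1))) ∧
      (∀ (R' : Matrix X X ℂ) (Φ' : Matrix X X ℂ →ₗ[ℂ] Matrix Y Y ℂ),
        R'.PosDef → (choi fun M => Φ' M).PosSemidef → (∀ M, (Φ' M).trace = M.trace) →
        (∀ M, Θ M = Φ' (msqrt R' * M * msqrt R')) → R' = Θadj 1 ∧ Φ' = Φ) ∧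
      (choi fun M => Φ M) =
        (((msqrt (ptraceY (choi fun M => Θ M)))⁻¹ ⊗ₖ (1 : Matrix Y Y ℂ)) *
          (choi fun M => Θ M) *
          ((msqrt (ptraceY (choi fun M => Θ M)))⁻¹ ⊗ₖ (1 : Matrix Y Y ℂ))) ∧
      ptraceY (choi fun M => Φ M) = 1 ∧
      (∀ N : Matrix (X × Y) (X × Y) ℂ, N.PosSemidef → ptraceY N = 1 →
        fidelity (choi fun M => Θ M) N ≤
          fidelity (choi fun M => Θ M) (choi fun M => Φ M) ∧
        (fidelity (choi fun M => Θ M) N =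
            fidelity (choi fun M => Θ M) (choi fun M => Φ M) →
          N = choi fun M => Φ M)) := by
  classical
  set C := (choi fun M => Θ M) with hCdef
  set R := Θadj 1 with hRdef
  have hRH : Rᴴ = R := hR.isHermitian
  have hRpsd : R.PosSemidef := hR.posSemidef
  set S := msqrt R with hSdef
  have hSpsd : S.PosSemidef := msqrt_posSemidef hRpsd
  have hSH : Sᴴ = S := hSpsd.1
  have hSS : S * S = R := msqrt_mul_self hRpsd
  have hSdet : IsUnit S.det := msqrt_det_isUnit hRpsd hR.det_pos.ne'.isUnit
  have hSinv : S⁻¹ * S = 1 := nonsing_inv_mul _ hSdet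
  have hSinv' : S * S⁻¹ = 1 := mul_nonsing_inv _ hSdet
  have hSinvH : (S⁻¹)ᴴ = S⁻¹ := by rw [conjTranspose_nonsing_inv, hSH]
  have htr : ∀ M, (Θ M).trace = (R * M).trace := by
    intro M
    have h := hadj M 1
    rwa [Matrix.conjTranspose_one, Matrix.one_mul, ← hRdef, hRH] at h
  set Φ : Matrix X X ℂ →ₗ[ℂ] Matrix Y Y ℂ :=
    Θ ∘ₗ ((LinearMap.mulRight ℂ S⁻¹) ∘ₗ (LinearMap.mulLeft ℂ S⁻¹)) with hΦdef
  have hΦ : ∀ M, Φ M = Θ (S⁻¹ * M * S⁻¹) := fun M => rfl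
  -- trace preservation
  have htrΦ : ∀ M : Matrix X X ℂ, (Φ M).trace = M.trace := by
    intro M
    rw [hΦ, htr]
    have h1 : R * (S⁻¹ * M * S⁻¹) = S * (M * S⁻¹) := by
      calc R * (S⁻¹ * M * S⁻¹) = (S * S) * (S⁻¹ * M * S⁻¹) := by rw [hSS]
        _ = S * ((S * S⁻¹) * (M * S⁻¹)) := by simp only [Matrix.mul_assoc]
        _ = S * (M * S⁻¹) := by rw [hSinv', Matrix.one_mul]
    rw [h1, Matrix.trace_mul_comm, Matrix.mul_assoc, hSinv, Matrix.mul_one]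
  -- factorization
  have hfacΦ : ∀ M, Θ M = Φ (S * M * S) := by
    intro M
    rw [hΦ]
    have h1 : S⁻¹ * (S * M * S) * S⁻¹ = M := by
      calc S⁻¹ * (S * M * S) * S⁻¹ = (S⁻¹ * S) * (M * (S * S⁻¹)) := by
            simp only [Matrix.mul_assoc]
        _ = M := by rw [hSinv, hSinv', Matrix.one_mul, Matrix.mul_one]
    rw [h1]
  -- partial trace of choi Θ
  have hptC : ptraceY C = Rᵀ := by
    ext x x'
    rw [ptraceY, Matrix.of_apply, Matrix.transpose_apply]
    have h1 : ∑ y, C (x,y) (x',y) = (Θ (Matrix.single x x' 1)).trace := by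
      rw [Matrix.trace]; exact Finset.sum_congr rfl fun y _ => rfl
    rw [h1, htr, trace_mul_stdBasis]
  have hmsqpt : msqrt (ptraceY C) = Sᵀ := by
    rw [hptC]
    exact (eq_msqrt hSpsd.transpose hRpsd.transpose
      (by rw [← Matrix.transpose_mul, hSS])).symm
  have hAeq : (msqrt (ptraceY C))⁻¹ = (S⁻¹)ᵀ := by
    rw [hmsqpt]; exact (Matrix.transpose_nonsing_inv S).symm
  set GG : Matrix (X × Y) (X × Y) ℂ := (S⁻¹)ᵀ ⊗ₖ (1 : Matrix Y Y ℂ) with hGGdef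
  -- choi of Φ
  have hchoiΦ : (choi fun M => Φ M) = GG * C * GG := by
    ext p q
    rw [hGGdef, kron_conj_entry S⁻¹ C p q]
    show Θ (S⁻¹ * Matrix.single p.1 q.1 1 * S⁻¹) p.2 q.2 = _
    have hdec : S⁻¹ * Matrix.single p.1 q.1 1 * S⁻¹
        = ∑ a, ∑ b, (S⁻¹ a p.1 * S⁻¹ q.1 b) • Matrix.single a b (1:ℂ) := by
      ext a b
      rw [mul_stdBasis_mul]
      simp [Matrix.sum_apply, Matrix.smul_apply, Matrix.single, Matrix.of_apply,
        smul_eq_mul, mul_ite, ite_and, Finset.sum_ite_eq, Finset.sum_ite_eq', mul_one, mul_zero]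
    rw [hdec, map_sum]
    rw [Matrix.sum_apply]
    refine Finset.sum_congr rfl fun a _ => ?_
    rw [map_sum, Matrix.sum_apply]
    refine Finset.sum_congr rfl fun b _ => ?_
    rw [LinearMap.map_smul, Matrix.smul_apply, smul_eq_mul]
    show S⁻¹ a p.1 * S⁻¹ q.1 b * Θ (Matrix.single a b 1) p.2 q.2 = _
    rfl
  have hSinvTH : ((S⁻¹)ᵀ)ᴴ = (S⁻¹)ᵀ := by
    ext a b
    rw [Matrix.conjTranspose_apply, Matrix.transpose_apply, Matrix.transpose_apply]
    have h2 : (S⁻¹)ᴴ b a = S⁻¹ b a := by rw [hSinvH]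
    rw [Matrix.conjTranspose_apply] at h2
    exact h2
  have hGGH : GGᴴ = GG := by
    rw [hGGdef, kron_one_conjT, hSinvTH]
  -- positivity of choi Φ
  have hchoipsd : (choi fun M => Φ M).PosSemidef := by
    rw [hchoiΦ]
    have := hCP.conjTranspose_mul_mul_same GG
    rwa [hGGH] at this
  -- partial trace of choi Φ is 1
  have hptΦ : ptraceY (choi fun M => Φ M) = 1 := by
    ext x x'
    rw [ptraceY, Matrix.of_apply]
    have h1 : ∑ y, (choi fun M => Φ M) (x,y) (x',y)
        = (Φ (Matrix.single x x' 1)).trace := by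
      rw [Matrix.trace]; exact Finset.sum_congr rfl fun y _ => rfl
    rw [h1, htrΦ, ← Matrix.one_mul (Matrix.single x x' (1:ℂ)), trace_mul_stdBasis]
    simp [Matrix.one_apply, eq_comm]
  -- GG facts for the fidelity part
  have hGGleft : (Sᵀ ⊗ₖ (1 : Matrix Y Y ℂ)) * GG = 1 := by
    rw [hGGdef, kron_one_mul_kron_one, ← Matrix.transpose_mul, hSinv, Matrix.transpose_one,
      Matrix.one_kronecker_one]
  have hGGpsd : GG.PosSemidef := kron_one_psd (hSpsd.inv.transpose)
  have hGGdet : IsUnit GG.det := Matrix.isUnit_det_of_left_inverse hGGleft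
  have hGGinv : GG⁻¹ = Sᵀ ⊗ₖ (1 : Matrix Y Y ℂ) := Matrix.inv_eq_left_inv hGGleft
  have htau1 : (GG * C).trace = S.trace := by
    rw [hGGdef, trace_kron_one_mul, hptC, ← Matrix.transpose_mul, Matrix.trace_transpose]
    have h1 : R * S⁻¹ = S := by
      rw [← hSS, Matrix.mul_assoc, hSinv', Matrix.mul_one]
    rw [h1]
  have htau2 : ∀ N : Matrix (X × Y) (X × Y) ℂ, ptraceY N = 1 → (GG⁻¹ * N).trace = S.trace := by
    intro N hptN
    rw [hGGinv, trace_kron_one_mul, hptN, Matrix.mul_one, Matrix.trace_transpose]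
  have hopt : fidelity C (choi fun M => Φ M) = S.trace.re := by
    rw [hchoiΦ, fidelity_opt C GG hCP hGGpsd hGGdet, htau1]
  refine ⟨Φ, hchoipsd, htrΦ, ?_, ?_, ?_, hptΦ, ?_⟩
  · intro M; exact hfacΦ M
  · -- uniqueness
    intro R' Φ' hR' hΦ'psd hΦ'tr hfac
    have hR'psd := hR'.posSemidef
    have hS'psd : (msqrt R').PosSemidef := msqrt_posSemidef hR'psd
    have hS'S' : msqrt R' * msqrt R' = R' := msqrt_mul_self hR'psd
    have htr' : ∀ M, (R' * M).trace = (R * M).trace := by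
      intro M
      have h1 := hfac M
      have h2 := hΦ'tr (msqrt R' * M * msqrt R')
      rw [← h1] at h2
      have h3 : (msqrt R' * M * msqrt R').trace = (R' * M).trace := by
        rw [Matrix.trace_mul_comm, ← Matrix.mul_assoc, hS'S']
      rw [htr M] at h2
      rw [← h3]; exact h2.symm
    have hR'R : R' = R := by
      ext i j
      have h1 := htr' (Matrix.single j i 1)
      rwa [trace_mul_stdBasis, trace_mul_stdBasis] at h1
    refine ⟨hR'R, ?_⟩
    apply LinearMap.ext
    intro M
    have h4 := hfac (S⁻¹ * M * S⁻¹)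
    rw [hR'R, ← hSdef] at h4
    have h5 : S * (S⁻¹ * M * S⁻¹) * S = M := by
      calc S * (S⁻¹ * M * S⁻¹) * S = (S * S⁻¹) * (M * (S⁻¹ * S)) := by
            simp only [Matrix.mul_assoc]
        _ = M := by rw [hSinv, hSinv', Matrix.one_mul, Matrix.mul_one]
    rw [h5] at h4
    rw [← h4, hΦ]
  · rw [hAeq, ← hGGdef]; exact hchoiΦ
  · -- fidelity bound
    intro N hN hptN
    have hbd := fidelity_bound C GG N hCP hGGpsd hGGdet hN
    have hb1 := hbd.1
    rw [htau1, htau2 N hptN] at hb1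
    constructor
    · rw [hopt]; linarith
    · intro heq
      rw [hopt] at heq
      have h6 : N = GG * C * GG := by
        apply hbd.2
        rw [htau1, htau2 N hptN, heq]; ring
      rw [h6, hchoiΦ]
end
end

section
/- Let Θ be a completely positive map from matrices over 𝒳 to matrices over 𝒴 with positive definite Choi matrix marginal, and let R := Θ†(I_𝒴) be positive definite and S be positive definite on 𝒳. Let Ξ := Θ ∘ K_{(R^{-1} # S)²}, i.e., Ξ(X) = Θ(G X G) with G := R^{-1} # S. Then Ξ†(I_𝒴) = S, and the Choi matrix 𝔠(Ξ) is the unique Bures projection of 𝔠(Θ) onto the set {M PSD on 𝒳⊗𝒴 : Tr_𝒴[M] = Sᵀ}, i.e., 𝔠(Ξ) maximizes M ↦ F(𝔠(Θ), M) over this set. -/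
open Matrix Kronecker
open scoped ComplexOrder

noncomputable section

set_option linter.unusedSectionVars false
set_option maxHeartbeats 1000000

namespace Aux



variable {n : Type*} [Fintype n] [DecidableEq n]

open scoped MatrixOrder in
lemma msqrt_eq {A : Matrix n n ℂ} (h : A.PosSemidef) : msqrt A = CFC.sqrt A := by
  unfold msqrt; rw [dif_pos h]
  rw [CFC.sqrt_eq_cfc, cfc_nnreal_eq_real _ A, h.1.cfc_eq]
  simp [IsHermitian.cfc, Unitary.conjStarAlgAut_apply, Function.comp_def,
    max_eq_left (h.eigenvalues_nonneg _)]

open scoped MatrixOrder in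
lemma msqrt_posSemidef {A : Matrix n n ℂ} (h : A.PosSemidef) : (msqrt A).PosSemidef := by
  rw [msqrt_eq h]; exact (CFC.sqrt_nonneg A).posSemidef

lemma msqrt_isHermitian {A : Matrix n n ℂ} (h : A.PosSemidef) : (msqrt A).IsHermitian :=
  (msqrt_posSemidef h).1

open scoped MatrixOrder in
lemma msqrt_mul_self {A : Matrix n n ℂ} (h : A.PosSemidef) : msqrt A * msqrt A = A := by
  rw [msqrt_eq h]; exact CFC.sqrt_mul_sqrt_self A h.nonneg

open scoped MatrixOrder in
lemma msqrt_unique {A B : Matrix n n ℂ} (hB : B.PosSemidef) (hBA : B * B = A) :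
    msqrt A = B := by
  have hA : A.PosSemidef := by
    have : A = Bᴴ * B := by rw [hB.1, hBA]
    rw [this]; exact Matrix.posSemidef_conjTranspose_mul_self B
  rw [msqrt_eq hA]
  exact CFC.sqrt_unique hBA hB.nonneg

lemma trace_conjTranspose_mul_self_re (C : Matrix n n ℂ) :
    (Cᴴ * C).trace = ((∑ i, ∑ j, Complex.normSq (C j i) : ℝ) : ℂ) := by
  simp only [Matrix.trace, Matrix.diag, Matrix.mul_apply, Matrix.conjTranspose_apply]
  push_cast
  congr 1; ext i; congr 1; ext j
  rw [Complex.normSq_eq_conj_mul_self]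
  rfl

lemma trace_cc_nonneg (C : Matrix n n ℂ) : 0 ≤ ((Cᴴ * C).trace).re := by
  rw [trace_conjTranspose_mul_self_re, Complex.ofReal_re]
  exact Finset.sum_nonneg fun i _ => Finset.sum_nonneg fun j _ => Complex.normSq_nonneg _

lemma trace_cc_eq_zero {C : Matrix n n ℂ} (h : ((Cᴴ * C).trace).re = 0) : C = 0 := by
  rw [trace_conjTranspose_mul_self_re, Complex.ofReal_re] at h
  ext i j
  have h1 : ∀ a ∈ Finset.univ (α := n), 0 ≤ ∑ b, Complex.normSq (C b a) :=
    fun a _ => Finset.sum_nonneg fun b _ => Complex.normSq_nonneg _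
  have h2 := (Finset.sum_eq_zero_iff_of_nonneg h1).mp h j (Finset.mem_univ _)
  have h3 := (Finset.sum_eq_zero_iff_of_nonneg
    (fun b _ => Complex.normSq_nonneg (C b j))).mp h2 i (Finset.mem_univ _)
  simpa using Complex.normSq_eq_zero.mp h3





/-- Pseudoinverse of a Hermitian matrix, via the spectral theorem. -/
noncomputable def ppinv {A : Matrix n n ℂ} (hA : A.IsHermitian) : Matrix n n ℂ :=
  hA.eigenvectorUnitary.1 *
    Matrix.diagonal (fun i => ((if hA.eigenvalues i = 0 then (0 : ℝ)
      else (hA.eigenvalues i)⁻¹ : ℝ) : ℂ)) *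
    (star hA.eigenvectorUnitary.1)

lemma star_mul_self_eigen {A : Matrix n n ℂ} (hA : A.IsHermitian) :
    star hA.eigenvectorUnitary.1 * hA.eigenvectorUnitary.1 = 1 := by
  have := hA.eigenvectorUnitary.2
  rw [Matrix.mem_unitaryGroup_iff'] at this
  exact this

lemma vdv_mul_vdv {V : Matrix n n ℂ} (hV : star V * V = 1) (a b : n → ℂ) :
    (V * Matrix.diagonal a * star V) * (V * Matrix.diagonal b * star V)
      = V * Matrix.diagonal (fun i => a i * b i) * star V := by
  rw [show (V * Matrix.diagonal a * star V) * (V * Matrix.diagonal b * star V)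
      = V * (Matrix.diagonal a * (star V * V) * Matrix.diagonal b) * star V by
    simp only [Matrix.mul_assoc]]
  rw [hV, Matrix.mul_one, Matrix.diagonal_mul_diagonal]

lemma spectral {A : Matrix n n ℂ} (hA : A.IsHermitian) :
    A = hA.eigenvectorUnitary.1 *
      Matrix.diagonal (fun i => ((hA.eigenvalues i : ℝ) : ℂ)) * star hA.eigenvectorUnitary.1 := by
  have := hA.spectral_theorem
  rw [Unitary.conjStarAlgAut_apply] at this
  exact this

lemma ppinv_spec {A : Matrix n n ℂ} (hA : A.IsHermitian) :
    ∃ (V : Matrix n n ℂ) (d e : n → ℂ), star V * V = 1 ∧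
      A = V * Matrix.diagonal d * star V ∧
      ppinv hA = V * Matrix.diagonal e * star V ∧
      (∀ i, d i * e i * d i = d i) ∧ (∀ i, e i * d i * e i = e i) ∧
      (∀ i, d i * e i = e i * d i) := by
  refine ⟨hA.eigenvectorUnitary.1, fun i => ((hA.eigenvalues i : ℝ) : ℂ),
    fun i => ((if hA.eigenvalues i = 0 then (0 : ℝ) else (hA.eigenvalues i)⁻¹ : ℝ) : ℂ),
    star_mul_self_eigen hA, spectral hA, rfl, ?_, ?_, ?_⟩
  · intro i
    by_cases h : hA.eigenvalues i = 0
    · simp [h]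
    · simp only [if_neg h]; push_cast; field_simp
  · intro i
    by_cases h : hA.eigenvalues i = 0
    · simp [h]
    · simp only [if_neg h]; push_cast; field_simp
  · intro i; ring

lemma mul_ppinv_comm {A : Matrix n n ℂ} (hA : A.IsHermitian) :
    A * ppinv hA = ppinv hA * A := by
  obtain ⟨V, d, e, hV, hAe, hPe, _, _, h3⟩ := ppinv_spec hA
  rw [hPe, hAe, vdv_mul_vdv hV, vdv_mul_vdv hV, funext h3]

lemma mul_ppinv_mul {A : Matrix n n ℂ} (hA : A.IsHermitian) :
    A * ppinv hA * A = A := by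
  obtain ⟨V, d, e, hV, hAe, hPe, h1, _, _⟩ := ppinv_spec hA
  rw [hPe]
  conv_lhs => rw [hAe]
  conv_rhs => rw [hAe]
  rw [vdv_mul_vdv hV, vdv_mul_vdv hV, funext h1]

lemma ppinv_mul_ppinv {A : Matrix n n ℂ} (hA : A.IsHermitian) :
    ppinv hA * A * ppinv hA = ppinv hA := by
  obtain ⟨V, d, e, hV, hAe, hPe, _, h2, _⟩ := ppinv_spec hA
  rw [hPe, hAe, vdv_mul_vdv hV, vdv_mul_vdv hV, funext h2]

lemma ppinv_posSemidef {A : Matrix n n ℂ} (hA : A.PosSemidef) : (ppinv hA.1).PosSemidef := by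
  unfold ppinv
  have hd : (Matrix.diagonal (fun i => ((if hA.1.eigenvalues i = 0 then (0 : ℝ)
      else (hA.1.eigenvalues i)⁻¹ : ℝ) : ℂ))).PosSemidef := by
    rw [Matrix.posSemidef_diagonal_iff]
    intro i
    rw [Complex.zero_le_real]
    split
    · exact le_refl 0
    · exact inv_nonneg.mpr (hA.eigenvalues_nonneg i)
  have := hd.mul_mul_conjTranspose_same hA.1.eigenvectorUnitary.1
  rwa [← Matrix.star_eq_conjTranspose] at this

lemma ppinv_isHermitian {A : Matrix n n ℂ} (hA : A.PosSemidef) : (ppinv hA.1).IsHermitian :=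
  (ppinv_posSemidef hA).1


lemma trace_msqrt_symm (L : Matrix n n ℂ) :
    (msqrt (Lᴴ * L)).trace = (msqrt (L * Lᴴ)).trace := by
  have hH : (Lᴴ * L).PosSemidef := Matrix.posSemidef_conjTranspose_mul_self L
  set T := msqrt (Lᴴ * L) with hTdef
  have hT : T.PosSemidef := msqrt_posSemidef hH
  set tp := ppinv hT.1 with htpdef
  have hTT : T * T = Lᴴ * L := msqrt_mul_self hH
  have hcomm : T * tp = tp * T := mul_ppinv_comm hT.1
  have hTtT : T * tp * T = T := mul_ppinv_mul hT.1
  have hTTtp : T * (T * tp) = T := by rw [hcomm, ← Matrix.mul_assoc, hTtT]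
  have hρρ : (T * tp) * (T * tp) = T * tp := by rw [← Matrix.mul_assoc, hTtT]
  have hLρ : L * (T * tp) = L := by
    have h1 : (L - L * (T * tp))ᴴ * (L - L * (T * tp)) = 0 := by
      have e1 : (L - L * (T * tp))ᴴ * (L - L * (T * tp))
          = (1 - T * tp)ᴴ * ((Lᴴ * L) * (1 - T * tp)) := by
        rw [show L - L * (T * tp) = L * (1 - T * tp) by
          rw [Matrix.mul_sub, Matrix.mul_one]]
        rw [Matrix.conjTranspose_mul]
        simp only [Matrix.mul_assoc]
      have e2 : (Lᴴ * L) * (1 - T * tp) = 0 := by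
        rw [← hTT, Matrix.mul_sub, Matrix.mul_one, Matrix.mul_assoc, hTTtp, sub_self]
      rw [e1, e2, Matrix.mul_zero]
    have h2 := Matrix.conjTranspose_mul_self_eq_zero.mp h1
    rw [sub_eq_zero] at h2
    exact h2.symm
  have hT' : (L * tp * Lᴴ).PosSemidef := (ppinv_posSemidef hT).mul_mul_conjTranspose_same L
  have hT'sq : (L * tp * Lᴴ) * (L * tp * Lᴴ) = L * Lᴴ := by
    calc L * tp * Lᴴ * (L * tp * Lᴴ)
        = L * tp * (Lᴴ * L) * (tp * Lᴴ) := by simp only [Matrix.mul_assoc]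
      _ = L * tp * (T * T) * (tp * Lᴴ) := by rw [hTT]
      _ = L * ((tp * T) * (T * tp)) * Lᴴ := by simp only [Matrix.mul_assoc]
      _ = L * ((T * tp) * (T * tp)) * Lᴴ := by rw [hcomm]
      _ = L * (T * tp) * Lᴴ := by rw [hρρ]
      _ = L * Lᴴ := by rw [hLρ]
  have hmu : msqrt (L * Lᴴ) = L * tp * Lᴴ := msqrt_unique hT' hT'sq
  rw [hmu]
  have : (L * tp * Lᴴ).trace = ((Lᴴ * L) * tp).trace := by
    rw [Matrix.trace_mul_comm (L * tp) Lᴴ]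
    simp only [Matrix.mul_assoc]
  rw [this, ← hTT, Matrix.mul_assoc, hTTtp]

lemma key_ineq (P N sW : Matrix n n ℂ) (hP : P.PosSemidef) (hN : N.PosSemidef)
    (hsW : sWᴴ = sW) (hdet : IsUnit sW.det) :
    2 * fidelity P N ≤ ((P * (sW * sW)).trace).re + ((N * (sW * sW)⁻¹).trace).re ∧
    (2 * fidelity P N = ((P * (sW * sW)).trace).re + ((N * (sW * sW)⁻¹).trace).re →
      N = (sW * sW) * P * (sW * sW)) := by
  set sP := msqrt P with hsPdef
  have hsP : sP.PosSemidef := msqrt_posSemidef hP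
  have hsPH : sPᴴ = sP := hsP.1
  have hsPP : sP * sP = P := msqrt_mul_self hP
  set sN := msqrt N with hsNdef
  have hsN : sN.PosSemidef := msqrt_posSemidef hN
  have hsNH : sNᴴ = sN := hsN.1
  have hsNN : sN * sN = N := msqrt_mul_self hN
  set M := sP * sN with hMdef
  have hMH : Mᴴ = sN * sP := by rw [hMdef, Matrix.conjTranspose_mul, hsPH, hsNH]
  have hH : Mᴴ * M = sN * P * sN := by
    rw [hMH, hMdef, ← Matrix.mul_assoc, Matrix.mul_assoc sN sP sP, hsPP]
  have hHps : (sN * P * sN).PosSemidef := hH ▸ Matrix.posSemidef_conjTranspose_mul_self M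
  set T := msqrt (sN * P * sN) with hTdef
  have hfid : fidelity P N = T.trace.re := rfl
  have hT : T.PosSemidef := msqrt_posSemidef hHps
  have hTH : Tᴴ = T := hT.1
  have hTT : T * T = sN * P * sN := msqrt_mul_self hHps
  have hMM : Mᴴ * M = T * T := by rw [hH, hTT]
  set tp := ppinv hT.1 with htpdef
  have htpH : tpᴴ = tp := ppinv_isHermitian hT
  have hcomm : T * tp = tp * T := mul_ppinv_comm hT.1
  have hTtT : T * tp * T = T := mul_ppinv_mul hT.1
  have htTt : tp * T * tp = tp := ppinv_mul_ppinv hT.1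
  clear_value sP sN M T tp
  have htTt' : tp * (T * tp) = tp := by rw [← Matrix.mul_assoc, htTt]
  have hρρ : (T * tp) * (T * tp) = T * tp := by rw [← Matrix.mul_assoc, hTtT]
  have htpTT : tp * (T * T) = T := by
    rw [← Matrix.mul_assoc, ← hcomm, hTtT]
  -- inverse facts for sW
  have hsW1 : sW * sW⁻¹ = 1 := Matrix.mul_nonsing_inv sW hdet
  have hsW2 : sW⁻¹ * sW = 1 := Matrix.nonsing_inv_mul sW hdet
  have hsWinvH : (sW⁻¹)ᴴ = sW⁻¹ := by rw [Matrix.conjTranspose_nonsing_inv, hsW]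
  have hWinv : (sW * sW)⁻¹ = sW⁻¹ * sW⁻¹ := Matrix.mul_inv_rev sW sW
  set U := M * tp with hUdef
  have hUH : Uᴴ = tp * Mᴴ := by rw [hUdef, Matrix.conjTranspose_mul, htpH]
  clear_value U
  set Pr := U * Uᴴ with hPrdef
  have hPrH : Prᴴ = Pr := by
    rw [hPrdef, Matrix.conjTranspose_mul, Matrix.conjTranspose_conjTranspose]
  have hUU : Uᴴ * U = T * tp := by
    rw [hUH, hUdef]
    calc tp * Mᴴ * (M * tp) = tp * (Mᴴ * M) * tp := by simp only [Matrix.mul_assoc]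
      _ = tp * (T * T) * tp := by rw [hMM]
      _ = T * tp := by rw [htpTT]
  have hPrPr : Pr * Pr = Pr := by
    calc Pr * Pr = U * (Uᴴ * U) * Uᴴ := by
          rw [hPrdef]; simp only [Matrix.mul_assoc]
      _ = U * (T * tp) * Uᴴ := by rw [hUU]
      _ = M * (tp * (T * tp)) * Uᴴ := by rw [hUdef]; simp only [Matrix.mul_assoc]
      _ = M * tp * Uᴴ := by rw [htTt']
      _ = Pr := by rw [← hUdef, hPrdef]
  clear_value Pr
  have hone : (1 - Pr) * (1 - Pr) = 1 - Pr := by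
    have e : (1 - Pr) * (1 - Pr) = 1 - Pr - Pr + Pr * Pr := by noncomm_ring
    rw [e, hPrPr]
    abel
  have honeH : (1 - Pr)ᴴ = 1 - Pr := by
    rw [Matrix.conjTranspose_sub, Matrix.conjTranspose_one, hPrH]
  set A1 := sW * sP * U with hA1def
  set B1 := sW⁻¹ * sN with hB1def
  clear_value A1 B1
  have hA1H : A1ᴴ = Uᴴ * (sP * sW) := by
    rw [hA1def, Matrix.conjTranspose_mul, Matrix.conjTranspose_mul, hsPH, hsW]
  have hB1H : B1ᴴ = sN * sW⁻¹ := by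
    rw [hB1def, Matrix.conjTranspose_mul, hsNH, hsWinvH]
  -- t1 : A1ᴴ * B1 = T
  have ht1 : A1ᴴ * B1 = T := by
    calc A1ᴴ * B1 = Uᴴ * (sP * (sW * sW⁻¹) * sN) := by
          rw [hA1H, hB1def]; simp only [Matrix.mul_assoc]
      _ = Uᴴ * (sP * sN) := by rw [hsW1, Matrix.mul_one]
      _ = tp * (Mᴴ * M) := by rw [hUH, ← hMdef, Matrix.mul_assoc]
      _ = T := by rw [hMM, htpTT]
  set D := sP * (sW * sW) * sP with hDdef
  -- t2
  have ht2 : (A1ᴴ * A1).trace = (D * Pr).trace := by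
    have e1 : A1ᴴ * A1 = Uᴴ * (D * U) := by
      rw [hA1H, hA1def, hDdef]; simp only [Matrix.mul_assoc]
    rw [e1, Matrix.trace_mul_comm, Matrix.mul_assoc, hPrdef, ← Matrix.mul_assoc]
  -- t4
  have ht4 : (B1ᴴ * B1).trace = (N * (sW * sW)⁻¹).trace := by
    have e1 : B1ᴴ * B1 = sN * ((sW * sW)⁻¹ * sN) := by
      rw [hB1H, hB1def, hWinv]; simp only [Matrix.mul_assoc]
    rw [e1, Matrix.trace_mul_comm, Matrix.mul_assoc, hsNN, Matrix.trace_mul_comm]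
  -- t5/t6 : s2 as a square
  set C2 := sW * sP * (1 - Pr) with hC2def
  have ht5 : C2ᴴ * C2 = (1 - Pr) * D * (1 - Pr) := by
    rw [hC2def, Matrix.conjTranspose_mul, Matrix.conjTranspose_mul, honeH, hsPH, hsW, hDdef]
    simp only [Matrix.mul_assoc]
  have ht6 : (D * (1 - Pr)).trace = (C2ᴴ * C2).trace := by
    rw [ht5]
    calc (D * (1 - Pr)).trace = (D * ((1 - Pr) * (1 - Pr))).trace := by rw [hone]
      _ = (((1 - Pr) * (1 - Pr)) * D).trace := by rw [Matrix.trace_mul_comm]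
      _ = ((1 - Pr) * D * (1 - Pr)).trace := by
          rw [Matrix.mul_assoc, Matrix.trace_mul_comm, Matrix.mul_assoc]
  have htD : D.trace = (P * (sW * sW)).trace := by
    rw [hDdef, Matrix.trace_mul_comm, ← Matrix.mul_assoc, Matrix.mul_assoc sP sP,
      ← Matrix.mul_assoc sP sP, hsPP]
  have hsplit : (A1ᴴ * A1).trace + (C2ᴴ * C2).trace = (P * (sW * sW)).trace := by
    rw [ht2, ← ht6, ← htD, Matrix.mul_sub, Matrix.mul_one, Matrix.trace_sub]
    ring
  have hBA : (B1ᴴ * A1).trace = star ((A1ᴴ * B1).trace) := by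
    rw [show B1ᴴ * A1 = (A1ᴴ * B1)ᴴ by
      rw [Matrix.conjTranspose_mul, Matrix.conjTranspose_conjTranspose],
      Matrix.trace_conjTranspose]
  have hpar : ((A1 - B1)ᴴ * (A1 - B1)).trace
      = (A1ᴴ * A1).trace + (B1ᴴ * B1).trace - (A1ᴴ * B1).trace - (B1ᴴ * A1).trace := by
    rw [Matrix.conjTranspose_sub, sub_mul, mul_sub, mul_sub, Matrix.trace_sub,
      Matrix.trace_sub, Matrix.trace_sub]
    ring
  -- real parts
  set f := fidelity P N with hfdef
  have hfT : f = T.trace.re := hfid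
  have h2f : (A1ᴴ * B1).trace.re + (B1ᴴ * A1).trace.re = 2 * f := by
    rw [hBA, Complex.star_def, Complex.conj_re, ht1, hfT]; ring
  set s1 := ((A1 - B1)ᴴ * (A1 - B1)).trace.re with hs1def
  set s2 := (C2ᴴ * C2).trace.re with hs2def
  have hs1 : 0 ≤ s1 := trace_cc_nonneg _
  have hs2 : 0 ≤ s2 := trace_cc_nonneg _
  have hmain : 2 * f = ((P * (sW * sW)).trace).re + ((N * (sW * sW)⁻¹).trace).re - s1 - s2 := by
    have e1 := congrArg Complex.re hpar
    have e2 := congrArg Complex.re hsplit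
    simp only [Complex.sub_re, Complex.add_re] at e1 e2
    rw [hs1def, hs2def] at *
    have e3 := congrArg Complex.re ht4
    rw [← h2f, ← e3]
    linarith [e1, e2]
  constructor
  · rw [hfdef] at hmain ⊢
    linarith
  · intro heq
    rw [hfdef] at hmain
    have hzero : s1 + s2 = 0 := by linarith [heq, hmain]
    have hs1z : s1 = 0 := by linarith
    have hs2z : s2 = 0 := by linarith
    have hAB : A1 = B1 := by
      have := trace_cc_eq_zero (C := A1 - B1) hs1z
      rwa [sub_eq_zero] at this
    have hC2z : C2 = 0 := trace_cc_eq_zero hs2z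
    -- sP * (1 - Pr) = 0
    have hsPPr : sP * Pr = sP := by
      have e1 : sW⁻¹ * (sW * sP * (1 - Pr)) = sP * (1 - Pr) := by
        rw [← Matrix.mul_assoc, ← Matrix.mul_assoc, hsW2, Matrix.one_mul]
      rw [hC2def] at hC2z
      rw [hC2z, Matrix.mul_zero] at e1
      have e2 : sP * (1 - Pr) = sP - sP * Pr := by
        rw [Matrix.mul_sub, Matrix.mul_one]
      have e3 : sP - sP * Pr = 0 := by rw [← e2, ← e1]
      exact (sub_eq_zero.mp e3).symm
    -- sN = (sW * sW) * (sP * U)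
    have hsNW : sN = sW * sW * (sP * U) := by
      have e1 : sW * A1 = sW * B1 := by rw [hAB]
      rw [hA1def, hB1def] at e1
      have e2 : sW * (sW⁻¹ * sN) = sN := by
        rw [← Matrix.mul_assoc, hsW1, Matrix.one_mul]
      rw [e2] at e1
      rw [← e1]; simp only [Matrix.mul_assoc]
    -- conclude
    have hNfinal : N = (sW * sW) * P * (sW * sW) := by
      have e0 : N = sN * sNᴴ := by rw [hsNH, hsNN]
      rw [e0, hsNW]
      have e1 : (sW * sW * (sP * U))ᴴ = Uᴴ * sP * (sW * sW) := by
        simp only [Matrix.conjTranspose_mul, hsPH, hsW, Matrix.mul_assoc]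
      rw [e1]
      calc sW * sW * (sP * U) * (Uᴴ * sP * (sW * sW))
          = sW * sW * (sP * (U * Uᴴ) * sP) * (sW * sW) := by simp only [Matrix.mul_assoc]
        _ = sW * sW * (sP * Pr * sP) * (sW * sW) := by rw [← hPrdef, Matrix.mul_assoc]
        _ = sW * sW * P * (sW * sW) := by rw [hsPPr, hsPP]
    exact hNfinal




variable {X Y : Type*} [Fintype X] [DecidableEq X] [Fintype Y] [DecidableEq Y]

lemma trace_mul_stdBasis (C : Matrix X X ℂ) (x x' : X) :
    (C * Matrix.single x x' 1).trace = C x' x := by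
  simp [Matrix.trace, Matrix.diag, Matrix.mul_apply, Matrix.single,
    Finset.sum_ite_eq, Finset.sum_ite_eq', ite_and]

lemma mul_stdBasis_mul (G G' : Matrix X X ℂ) (x x' : X) :
    G * Matrix.single x x' 1 * G'
      = ∑ a, ∑ b, (G a x * G' x' b) • Matrix.single a b 1 := by
  ext a b
  simp [Matrix.mul_apply, Matrix.single, Matrix.sum_apply, ite_and,
    Finset.sum_ite_eq, Finset.sum_ite_eq']

lemma kron_conjTranspose (A : Matrix X X ℂ) (B : Matrix Y Y ℂ) :
    (A ⊗ₖ B)ᴴ = Aᴴ ⊗ₖ Bᴴ := by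
  ext p q
  simp [Matrix.conjTranspose_apply, Matrix.kroneckerMap_apply, star_mul']

lemma trace_mul_kron (P' : Matrix (X × Y) (X × Y) ℂ) (C : Matrix X X ℂ) :
    (P' * (C ⊗ₖ (1 : Matrix Y Y ℂ))).trace = ((ptraceY P') * C).trace := by
  have lhs : (P' * (C ⊗ₖ (1 : Matrix Y Y ℂ))).trace
      = ∑ x : X, ∑ y : Y, ∑ x' : X, P' (x, y) (x', y) * C x' x := by
    simp only [Matrix.trace, Matrix.diag, Matrix.mul_apply, Matrix.kroneckerMap_apply,
      Matrix.one_apply, Fintype.sum_prod_type, mul_ite, mul_one, mul_zero]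
    refine Finset.sum_congr rfl fun x _ => ?_
    refine Finset.sum_congr rfl fun y _ => ?_
    refine Finset.sum_congr rfl fun x' _ => ?_
    simp
  have rhs : ((ptraceY P') * C).trace
      = ∑ x : X, ∑ x' : X, (∑ y : Y, P' (x, y) (x', y)) * C x' x := by
    simp only [Matrix.trace, Matrix.diag, Matrix.mul_apply, ptraceY, Matrix.of_apply]
  rw [lhs, rhs]
  refine Finset.sum_congr rfl fun x _ => ?_
  rw [Finset.sum_comm]
  refine Finset.sum_congr rfl fun x' _ => ?_
  rw [Finset.sum_mul]


lemma kron_mul_kron_apply (Gm : Matrix X X ℂ) (Pm : Matrix (X × Y) (X × Y) ℂ)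
    (x x' : X) (y y' : Y) :
    ((Gmᵀ ⊗ₖ (1 : Matrix Y Y ℂ)) * Pm * (Gmᵀ ⊗ₖ (1 : Matrix Y Y ℂ))) (x, y) (x', y')
      = ∑ a, ∑ b, Gm a x * (Pm (a, y) (b, y') * Gm x' b) := by
  have e1 : ∀ a : X, (Pm * (Gmᵀ ⊗ₖ (1 : Matrix Y Y ℂ))) (a, y) (x', y')
      = ∑ b, Pm (a, y) (b, y') * Gm x' b := by
    intro a
    simp only [Matrix.mul_apply, Matrix.kroneckerMap_apply, Matrix.one_apply,
      Fintype.sum_prod_type, Matrix.transpose_apply, mul_ite, mul_one, mul_zero,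
      Finset.sum_ite_eq, Finset.sum_ite_eq', Finset.mem_univ, if_true]
  rw [Matrix.mul_assoc]
  rw [show ((Gmᵀ ⊗ₖ (1 : Matrix Y Y ℂ)) * (Pm * (Gmᵀ ⊗ₖ (1 : Matrix Y Y ℂ)))) (x, y) (x', y')
      = ∑ a, Gm a x * (Pm * (Gmᵀ ⊗ₖ (1 : Matrix Y Y ℂ))) (a, y) (x', y') by
    simp only [Matrix.mul_apply, Matrix.kroneckerMap_apply, Matrix.one_apply,
      Fintype.sum_prod_type, Matrix.transpose_apply, mul_ite, mul_one, mul_zero,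
      ite_mul, zero_mul, Finset.sum_ite_eq, Finset.sum_ite_eq', Finset.mem_univ, if_true]]
  refine Finset.sum_congr rfl fun a _ => ?_
  rw [e1 a, Finset.mul_sum]

end Aux

/-- Let `Θ` be a CP map with adjoint `Θadj`, prior `R = Θadj 1`
positive definite, and let `S` be positive definite. With `G = R⁻¹ # S` and
`Ξ = Θ ∘ K_{G²}`, i.e. `Ξ(X) = Θ(G X G)`, the prior of `Ξ` is `S`
(`Ξ†(I) = G R G = S`), and `𝔠(Ξ)` is the unique Bures projection of `𝔠(Θ)` onto
`{M PSD : Tr_𝒴 M = Sᵀ}`. -/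
theorem projection_to_prior_S
    {X Y : Type*} [Fintype X] [DecidableEq X] [Fintype Y] [DecidableEq Y]
    (Θ : Matrix X X ℂ →ₗ[ℂ] Matrix Y Y ℂ)
    (hCP : (choi fun M => Θ M).PosSemidef)
    (Θadj : Matrix Y Y ℂ → Matrix X X ℂ)
    (hadj : ∀ (A : Matrix X X ℂ) (B : Matrix Y Y ℂ),
      (Bᴴ * Θ A).trace = ((Θadj B)ᴴ * A).trace)
    (hR : (Θadj 1).PosDef)
    (S : Matrix X X ℂ) (hS : S.PosDef)
    (G : Matrix X X ℂ) (hG : G = geomMean (Θadj 1)⁻¹ S)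
    (Ξ : Matrix X X ℂ → Matrix Y Y ℂ)
    (hΞ : ∀ M, Ξ M = Θ (G * M * G)) :
    G * Θadj 1 * G = S ∧
    (choi Ξ).PosSemidef ∧ ptraceY (choi Ξ) = Sᵀ ∧
    (∀ N : Matrix (X × Y) (X × Y) ℂ, N.PosSemidef → ptraceY N = Sᵀ →
      fidelity (choi fun M => Θ M) N ≤ fidelity (choi fun M => Θ M) (choi Ξ) ∧
      (fidelity (choi fun M => Θ M) N = fidelity (choi fun M => Θ M) (choi Ξ) →
        N = choi Ξ)) := by
  have hRH : (Θadj 1)ᴴ = Θadj 1 := hR.isHermitian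
  have hRdet : IsUnit (Θadj 1).det := isUnit_iff_ne_zero.mpr hR.det_pos.ne'
  have hRinv : ((Θadj 1)⁻¹).PosDef := hR.inv
  set u := msqrt ((Θadj 1)⁻¹) with hudef
  have hups : u.PosSemidef := Aux.msqrt_posSemidef hRinv.posSemidef
  have huH : uᴴ = u := hups.1
  have huu : u * u = (Θadj 1)⁻¹ := Aux.msqrt_mul_self hRinv.posSemidef
  have hudet : IsUnit u.det := by
    apply isUnit_iff_ne_zero.mpr
    intro h0
    have h1 : ((Θadj 1)⁻¹).det = 0 := by rw [← huu, Matrix.det_mul, h0, mul_zero]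
    exact hRinv.det_pos.ne' h1
  have hu1 : u * u⁻¹ = 1 := Matrix.mul_nonsing_inv u hudet
  have hu2 : u⁻¹ * u = 1 := Matrix.nonsing_inv_mul u hudet
  have huiH : (u⁻¹)ᴴ = u⁻¹ := by rw [Matrix.conjTranspose_nonsing_inv, huH]
  have huidet : IsUnit (u⁻¹).det := by
    apply isUnit_iff_ne_zero.mpr; intro h0
    have h1 := congrArg Matrix.det hu2
    rw [Matrix.det_mul, h0, zero_mul, Matrix.det_one] at h1
    exact zero_ne_one h1
  have hinner : (u⁻¹ * S * u⁻¹).PosSemidef := by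
    have h1 := hS.posSemidef.conjTranspose_mul_mul_same u⁻¹
    rwa [huiH] at h1
  set m := msqrt (u⁻¹ * S * u⁻¹) with hmdef
  have hmps : m.PosSemidef := Aux.msqrt_posSemidef hinner
  have hmH : mᴴ = m := hmps.1
  have hmm : m * m = u⁻¹ * S * u⁻¹ := Aux.msqrt_mul_self hinner
  have hmdet' : IsUnit m.det := by
    apply isUnit_iff_ne_zero.mpr; intro h0
    have h1 : (u⁻¹ * S * u⁻¹).det = 0 := by rw [← hmm, Matrix.det_mul, h0, mul_zero]
    rw [Matrix.det_mul, Matrix.det_mul] at h1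
    rcases mul_eq_zero.mp h1 with h2 | h2
    · rcases mul_eq_zero.mp h2 with h3 | h3
      · exact (isUnit_iff_ne_zero.mp huidet) h3
      · exact hS.det_pos.ne' h3
    · exact (isUnit_iff_ne_zero.mp huidet) h2
  have hGum : G = u * m * u := by rw [hG]; rfl
  -- Part 1 : G R G = S
  have goal1 : G * Θadj 1 * G = S := by
    have hRuu : Θadj 1 = u⁻¹ * u⁻¹ := by
      have h1 : ((Θadj 1)⁻¹)⁻¹ = (u * u)⁻¹ := by rw [huu]
      rw [Matrix.nonsing_inv_nonsing_inv _ hRdet] at h1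
      rw [h1, Matrix.mul_inv_rev]
    have e : G * Θadj 1 * G = u * (m * m) * u := by
      rw [hGum, hRuu]
      calc u * m * u * (u⁻¹ * u⁻¹) * (u * m * u)
          = u * m * ((u * u⁻¹) * (u⁻¹ * (u * (m * u)))) := by simp only [Matrix.mul_assoc]
        _ = u * m * (u⁻¹ * (u * (m * u))) := by rw [hu1, Matrix.one_mul]
        _ = u * m * ((u⁻¹ * u) * (m * u)) := by simp only [Matrix.mul_assoc]
        _ = u * m * (m * u) := by rw [hu2, Matrix.one_mul]
        _ = u * (m * m) * u := by simp only [Matrix.mul_assoc]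
    rw [e, hmm]
    calc u * (u⁻¹ * S * u⁻¹) * u = (u * u⁻¹) * (S * (u⁻¹ * u)) := by
          simp only [Matrix.mul_assoc]
      _ = S := by rw [hu1, hu2, Matrix.one_mul, Matrix.mul_one]
  -- G facts
  have hGH : Gᴴ = G := by
    rw [hGum, Matrix.conjTranspose_mul, Matrix.conjTranspose_mul, huH, hmH]
    simp only [Matrix.mul_assoc]
  have hGps : G.PosSemidef := by
    have h1 := hmps.conjTranspose_mul_mul_same u
    rw [huH] at h1
    rwa [hGum]
  have hGdet : IsUnit G.det := by
    rw [hGum, Matrix.det_mul, Matrix.det_mul]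
    exact (hudet.mul hmdet').mul hudet
  have hGi1 : G⁻¹ * G = 1 := Matrix.nonsing_inv_mul G hGdet
  -- W layer
  have hGT : Gᵀ.PosSemidef := hGps.transpose
  set g := msqrt Gᵀ with hgdef
  have hgps : g.PosSemidef := Aux.msqrt_posSemidef hGT
  have hgH : gᴴ = g := hgps.1
  have hgg : g * g = Gᵀ := Aux.msqrt_mul_self hGT
  have hgdet : IsUnit g.det := by
    apply isUnit_iff_ne_zero.mpr; intro h0
    have h1 : Gᵀ.det = 0 := by rw [← hgg, Matrix.det_mul, h0, mul_zero]
    rw [Matrix.det_transpose] at h1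
    exact (isUnit_iff_ne_zero.mp hGdet) h1
  set W := Gᵀ ⊗ₖ (1 : Matrix Y Y ℂ) with hWdef
  set sW := g ⊗ₖ (1 : Matrix Y Y ℂ) with hsWdef
  have hsWH : sWᴴ = sW := by
    rw [hsWdef, Aux.kron_conjTranspose, hgH, Matrix.conjTranspose_one]
  have hsWW : sW * sW = W := by
    rw [hsWdef, hWdef, ← Matrix.mul_kronecker_mul, hgg, Matrix.one_mul]
  have hsWdet : IsUnit sW.det := by
    rw [hsWdef, Matrix.det_kronecker, Matrix.det_one, one_pow, mul_one]
    exact hgdet.pow _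
  have hWH : Wᴴ = W := by rw [← hsWW, Matrix.conjTranspose_mul, hsWH]
  have hWps : W.PosSemidef := by
    rw [← hsWW]
    nth_rewrite 1 [← hsWH]
    exact Matrix.posSemidef_conjTranspose_mul_self sW
  have hWinv : W⁻¹ = (Gᵀ)⁻¹ ⊗ₖ (1 : Matrix Y Y ℂ) := by
    have h11 : (1 : Matrix Y Y ℂ)⁻¹ = 1 := Matrix.inv_eq_left_inv (Matrix.one_mul 1)
    rw [hWdef, Matrix.inv_kronecker, h11]
  -- choi identity
  set Pc := choi (fun M => Θ M) with hPcdef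
  have hchoi : choi Ξ = W * Pc * W := by
    ext p q
    obtain ⟨x, y⟩ := p; obtain ⟨x', y'⟩ := q
    have lhs0 : choi Ξ (x, y) (x', y') = Θ (G * Matrix.single x x' 1 * G) y y' := by
      simp [choi, hΞ]
    have e1 : Θ (G * Matrix.single x x' 1 * G)
        = ∑ a, ∑ b, (G a x * G x' b) • Θ (Matrix.single a b 1) := by
      rw [Aux.mul_stdBasis_mul, map_sum]
      refine Finset.sum_congr rfl fun a _ => ?_
      rw [map_sum]
      refine Finset.sum_congr rfl fun b _ => ?_
      exact Θ.map_smul _ _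
    rw [lhs0, e1, hWdef, hPcdef]
    rw [Aux.kron_mul_kron_apply G (choi fun M => Θ M) x x' y y']
    rw [Matrix.sum_apply]
    refine Finset.sum_congr rfl fun a _ => ?_
    rw [Matrix.sum_apply]
    refine Finset.sum_congr rfl fun b _ => ?_
    rw [Matrix.smul_apply, smul_eq_mul]
    have : (choi fun M => Θ M) (a, y) (b, y') = Θ (Matrix.single a b 1) y y' := rfl
    rw [this]
    ring
  -- partial trace identities
  have htrA : ∀ A : Matrix X X ℂ, (Θ A).trace = (Θadj 1 * A).trace := by
    intro A
    have h := hadj A 1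
    rwa [Matrix.conjTranspose_one, Matrix.one_mul, hRH] at h
  have hpt1 : ptraceY Pc = (Θadj 1)ᵀ := by
    ext x x'
    show ∑ y, Pc (x, y) (x', y) = (Θadj 1)ᵀ x x'
    have e0 : ∑ y, Pc (x, y) (x', y) = (Θ (Matrix.single x x' 1)).trace := rfl
    rw [e0, htrA, Aux.trace_mul_stdBasis, Matrix.transpose_apply]
  have hpt2 : ptraceY (choi Ξ) = Sᵀ := by
    ext x x'
    show ∑ y, choi Ξ (x, y) (x', y) = Sᵀ x x'
    have e0 : ∑ y, choi Ξ (x, y) (x', y) = (Ξ (Matrix.single x x' 1)).trace := rfl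
    rw [e0, hΞ, htrA]
    have e1 : Θadj 1 * (G * Matrix.single x x' 1 * G)
        = (Θadj 1 * G * Matrix.single x x' 1) * G := by
      simp only [Matrix.mul_assoc]
    rw [e1, Matrix.trace_mul_comm]
    have e2 : G * (Θadj 1 * G * Matrix.single x x' 1)
        = (G * Θadj 1 * G) * Matrix.single x x' 1 := by
      simp only [Matrix.mul_assoc]
    rw [e2, goal1, Aux.trace_mul_stdBasis, Matrix.transpose_apply]
  have hXips : (choi Ξ).PosSemidef := by
    rw [hchoi]
    have h1 := hCP.conjTranspose_mul_mul_same W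
    rwa [hWH] at h1
  -- trace values
  have htrPW : (Pc * W).trace = (G * Θadj 1).trace := by
    rw [hWdef, Aux.trace_mul_kron, hpt1]
    rw [show (Θadj 1)ᵀ * Gᵀ = (G * Θadj 1)ᵀ from (Matrix.transpose_mul G (Θadj 1)).symm,
      Matrix.trace_transpose]
  have htrNW : ∀ N : Matrix (X × Y) (X × Y) ℂ, ptraceY N = Sᵀ →
      (N * W⁻¹).trace = (G * Θadj 1).trace := by
    intro N hNpt
    rw [hWinv, Aux.trace_mul_kron, hNpt]
    rw [show (Gᵀ)⁻¹ = (G⁻¹)ᵀ from (Matrix.transpose_nonsing_inv G).symm]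
    rw [show Sᵀ * (G⁻¹)ᵀ = (G⁻¹ * S)ᵀ from (Matrix.transpose_mul _ _).symm,
      Matrix.trace_transpose]
    have e2 : G⁻¹ * S = Θadj 1 * G := by
      rw [← goal1]
      calc G⁻¹ * (G * Θadj 1 * G) = (G⁻¹ * G) * (Θadj 1 * G) := by
            simp only [Matrix.mul_assoc]
        _ = Θadj 1 * G := by rw [hGi1, Matrix.one_mul]
    rw [e2, Matrix.trace_mul_comm]
  -- fidelity at choi Ξ
  have hfidXi : fidelity Pc (choi Ξ) = ((Pc * W).trace).re := by
    set sPc := msqrt Pc with hsPcdef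
    have hsPcps : sPc.PosSemidef := Aux.msqrt_posSemidef hCP
    have hsPcH : sPcᴴ = sPc := hsPcps.1
    have hsPcc : sPc * sPc = Pc := Aux.msqrt_mul_self hCP
    set Q := choi Ξ with hQdef
    set sQ := msqrt Q with hsQdef
    have hsQps : sQ.PosSemidef := Aux.msqrt_posSemidef hXips
    have hsQH : sQᴴ = sQ := hsQps.1
    have hsQQ : sQ * sQ = Q := Aux.msqrt_mul_self hXips
    clear_value sPc sQ
    have harg : msqrt Q * Pc * msqrt Q = (sPc * sQ)ᴴ * (sPc * sQ) := by
      rw [Matrix.conjTranspose_mul, hsPcH, hsQH, ← hsQdef]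
      calc sQ * Pc * sQ = sQ * (sPc * sPc) * sQ := by rw [hsPcc]
        _ = sQ * sPc * (sPc * sQ) := by simp only [Matrix.mul_assoc]
    have hLLH : (sPc * sQ) * (sPc * sQ)ᴴ = (sPc * W * sPc) * (sPc * W * sPc) := by
      rw [Matrix.conjTranspose_mul, hsPcH, hsQH]
      calc sPc * sQ * (sQ * sPc) = sPc * (sQ * sQ) * sPc := by simp only [Matrix.mul_assoc]
        _ = sPc * (W * Pc * W) * sPc := by rw [hsQQ, hchoi]
        _ = sPc * (W * (sPc * sPc) * W) * sPc := by rw [hsPcc]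
        _ = (sPc * W * sPc) * (sPc * W * sPc) := by simp only [Matrix.mul_assoc]
    have hZps : (sPc * W * sPc).PosSemidef := by
      have h1 := hWps.conjTranspose_mul_mul_same sPc
      rwa [hsPcH] at h1
    show ((msqrt (msqrt Q * Pc * msqrt Q)).trace).re = ((Pc * W).trace).re
    rw [harg, Aux.trace_msqrt_symm, Aux.msqrt_unique hZps hLLH.symm]
    have e3 : (sPc * W * sPc).trace = (Pc * W).trace := by
      rw [Matrix.trace_mul_comm (sPc * W) sPc, ← Matrix.mul_assoc, hsPcc]
    rw [e3]
  -- assemble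
  refine ⟨goal1, hXips, hpt2, ?_⟩
  intro N hNps hNpt
  have hkey := Aux.key_ineq Pc N sW hCP hNps hsWH hsWdet
  rw [hsWW] at hkey
  have ha : ((Pc * W).trace).re = ((G * Θadj 1).trace).re := congrArg Complex.re htrPW
  have hb : ((N * W⁻¹).trace).re = ((G * Θadj 1).trace).re :=
    congrArg Complex.re (htrNW N hNpt)
  have hfX : fidelity Pc (choi Ξ) = ((G * Θadj 1).trace).re := by rw [hfidXi, ha]
  constructor
  · have h1 := hkey.1
    rw [ha, hb] at h1
    rw [hfX]
    linarith
  · intro heq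
    have h2 := hkey.2
    rw [ha, hb] at h2
    have h3 : N = W * Pc * W := by
      apply h2
      rw [heq, hfX]
      ring
    rw [h3, ← hchoi]
end
end
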